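/- arXiv:1808.00188 — 5 statements merged into one kernel-verified Lean document; each statement's English description precedes it below -/
import Mathlib

section
/- There exists a constant C > 0 such that for all real x ≥ 2, |∑_{n ≤ x} φ(⌊x/n⌋)/⌊x/n⌋ − κ·x| ≤ C·x^{1/2}, where κ = ∑_{n=1}^∞ φ(n)/(n²(n+1)); in particular this series converges. -/
open Finset Real Filter

private lemma floor_div_swap {x : ℝ} (hx : 0 ≤ x) {n k : ℕ} (hn : 0 < n) (hk : 0 < k) :
    k ≤ ⌊x / (n : ℝ)⌋₊ ↔ n ≤ ⌊x / (k : ℝ)⌋₊ := by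
  have hn' : (0:ℝ) < n := by exact_mod_cast hn
  have hk' : (0:ℝ) < k := by exact_mod_cast hk
  rw [Nat.le_floor_iff (by positivity), Nat.le_floor_iff (by positivity),
    le_div_iff₀ hn', le_div_iff₀ hk', mul_comm]

private lemma sum_Ioc_telescope (B : ℕ → ℝ) {K N : ℕ} (h : K ≤ N) :
    ∑ k ∈ Finset.Ioc K N, (B k - B (k+1)) = B (K+1) - B (N+1) := by
  rw [← Finset.Ico_add_one_add_one_eq_Ioc, Finset.sum_Ico_eq_sum_range]
  have h1 : N + 1 - (K + 1) = N - K := by omega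
  rw [h1]
  have h2 := Finset.sum_range_sub' (fun i : ℕ => B (K + 1 + i)) (N - K)
  simp only [add_zero] at h2
  calc ∑ k ∈ Finset.range (N - K), (B (K + 1 + k) - B (K + 1 + k + 1))
      = ∑ i ∈ Finset.range (N - K), (B (K + 1 + i) - B (K + 1 + (i + 1))) := rfl
    _ = B (K + 1 + 0) - B (K + 1 + (N - K)) := h2
    _ = B (K + 1) - B (N + 1) := by congr 2 <;> omega


private lemma hasSum_tel (a : ℕ) :
    HasSum (fun n : ℕ => 1/((n:ℝ)+a+1) - 1/((n:ℝ)+a+2)) (1/((a:ℝ)+1)) := by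
  have hnn : ∀ n : ℕ, 0 ≤ 1/((n:ℝ)+a+1) - 1/((n:ℝ)+a+2) := by
    intro n
    have h1 : (0:ℝ) < (n:ℝ)+a+1 := by positivity
    rw [sub_nonneg]
    apply div_le_div_of_nonneg_left zero_le_one h1
    linarith
  rw [hasSum_iff_tendsto_nat_of_nonneg hnn]
  have key : ∀ n : ℕ, ∑ i ∈ Finset.range n, (1/((i:ℝ)+a+1) - 1/((i:ℝ)+a+2))
      = 1/((a:ℝ)+1) - 1/((n:ℝ)+a+1) := by
    intro n
    have h2 := Finset.sum_range_sub' (fun i : ℕ => 1/((i:ℝ)+a+1)) n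
    have h6 : ∑ i ∈ Finset.range n, (1/((i:ℝ)+a+1) - 1/((i:ℝ)+a+2))
        = ∑ i ∈ Finset.range n, (1/((i:ℝ)+a+1) - 1/(((i+1:ℕ):ℝ)+a+1)) := by
      apply Finset.sum_congr rfl; intro i _; push_cast; ring_nf
    rw [h6, h2]
    push_cast
    ring
  simp only [key]
  have h3 : Tendsto (fun n : ℕ => 1/((n:ℝ)+a+1)) atTop (nhds 0) := by
    have h0 := tendsto_natCast_atTop_atTop (R := ℝ)
    have h4 : Tendsto (fun n : ℕ => (n:ℝ)+a+1) atTop atTop :=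
      tendsto_atTop_add_const_right _ 1 (tendsto_atTop_add_const_right _ (a:ℝ) h0)
    simpa only [one_div, Pi.inv_def] using h4.inv_tendsto_atTop
  have h5 := (tendsto_const_nhds (x := 1/((a:ℝ)+1)) (f := atTop (α := ℕ))).sub h3
  simpa using h5

private lemma floor_close {y : ℝ} (hy : 0 ≤ y) : |(⌊y⌋₊:ℝ) - y| ≤ 1 := by
  rw [abs_le]
  constructor
  · linarith [Nat.lt_floor_add_one y]
  · linarith [Nat.floor_le hy]

private noncomputable def gg (n : ℕ) : ℝ :=
  (Nat.totient (n + 1) : ℝ) / (((n : ℝ) + 1) ^ 2 * ((n : ℝ) + 2))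

private lemma gg_def (n : ℕ) :
    gg n = (Nat.totient (n + 1) : ℝ) / (((n : ℝ) + 1) ^ 2 * ((n : ℝ) + 2)) := rfl

private lemma gg_nonneg (n : ℕ) : 0 ≤ gg n := by rw [gg_def]; positivity

private lemma gg_le_tel (m : ℕ) : gg m ≤ 1/((m:ℝ)+1) - 1/((m:ℝ)+2) := by
  rw [gg_def]
  have h1 : (Nat.totient (m+1):ℝ) ≤ (m:ℝ)+1 := by
    have := Nat.totient_le (m+1)
    exact_mod_cast this
  have e : 1/((m:ℝ)+1) - 1/((m:ℝ)+2) = ((m:ℝ)+1)/(((m:ℝ)+1)^2*((m:ℝ)+2)) := by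
    have h2 : ((m:ℝ)+1) ≠ 0 := by positivity
    have h3 : ((m:ℝ)+2) ≠ 0 := by positivity
    field_simp
    ring
  rw [e]
  gcongr

private lemma summable_gg : Summable gg := by
  apply Summable.of_nonneg_of_le gg_nonneg (fun n => ?_) (hasSum_tel 0).summable
  simpa using gg_le_tel n

private lemma fiber_eq {x : ℝ} (hx : 2 ≤ x) {k : ℕ} (hk : 0 < k) :
    (Finset.Icc 1 ⌊x⌋₊).filter (fun n : ℕ => ⌊x / (n:ℝ)⌋₊ = k) =
      Finset.Ioc ⌊x / ((k:ℝ)+1)⌋₊ ⌊x / (k:ℝ)⌋₊ := by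
  have hx0 : (0:ℝ) ≤ x := by linarith
  have hcast : ((k+1:ℕ):ℝ) = (k:ℝ)+1 := by push_cast; ring
  ext n
  simp only [Finset.mem_filter, Finset.mem_Icc, Finset.mem_Ioc]
  constructor
  · rintro ⟨⟨h1, h2⟩, h3⟩
    have hn : 0 < n := h1
    constructor
    · by_contra h
      push_neg at h
      have h4 : (k+1 : ℕ) ≤ ⌊x/(n:ℝ)⌋₊ := by
        rw [floor_div_swap hx0 hn (Nat.succ_pos k), hcast]
        exact h
      omega
    · have h5 : k ≤ ⌊x/(n:ℝ)⌋₊ := h3.ge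
      rwa [floor_div_swap hx0 hn hk] at h5
  · rintro ⟨h1, h2⟩
    have hn : 0 < n := lt_of_le_of_lt (Nat.zero_le _) h1
    refine ⟨⟨hn, ?_⟩, ?_⟩
    · calc n ≤ ⌊x/(k:ℝ)⌋₊ := h2
        _ ≤ ⌊x/(1:ℝ)⌋₊ := by
          apply Nat.floor_le_floor
          apply div_le_div_of_nonneg_left hx0 one_pos
          exact_mod_cast hk
        _ = ⌊x⌋₊ := by rw [div_one]
    · have hub : k ≤ ⌊x/(n:ℝ)⌋₊ := (floor_div_swap hx0 hn hk).mpr h2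
      have hlb : ⌊x/(n:ℝ)⌋₊ < k + 1 := by
        by_contra h
        push_neg at h
        rw [show (k:ℕ)+1 = (k+1:ℕ) from rfl, floor_div_swap hx0 hn (Nat.succ_pos k), hcast] at h
        omega
      omega

/-- There exists `C > 0` such that for all `x ≥ 2`,
`|∑_{n ≤ x} φ(⌊x/n⌋)/⌊x/n⌋ − κ·x| ≤ C·√x`, where `κ = ∑_{n ≥ 1} φ(n)/(n²(n+1))`;
in particular this series converges. -/
theorem sum_totient_floor_div_over_floor :
    Summable (fun n : ℕ =>
      (Nat.totient (n + 1) : ℝ) / (((n : ℝ) + 1) ^ 2 * ((n : ℝ) + 2))) ∧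
    ∃ C : ℝ, 0 < C ∧ ∀ x : ℝ, 2 ≤ x →
      |(∑ n ∈ Finset.Icc 1 ⌊x⌋₊,
          (Nat.totient ⌊x / (n : ℝ)⌋₊ : ℝ) / (⌊x / (n : ℝ)⌋₊ : ℝ)) -
        (∑' n : ℕ, (Nat.totient (n + 1) : ℝ) / (((n : ℝ) + 1) ^ 2 * ((n : ℝ) + 2))) * x| ≤
        C * Real.sqrt x := by
  have hgeq : (fun n : ℕ => (Nat.totient (n + 1) : ℝ) / (((n : ℝ) + 1) ^ 2 * ((n : ℝ) + 2))) = gg := rfl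
  rw [hgeq]
  refine ⟨summable_gg, 5, by norm_num, fun x hx => ?_⟩
  have hx0 : (0:ℝ) ≤ x := by linarith
  have hsx_pos : 0 < Real.sqrt x := Real.sqrt_pos.mpr (by linarith)
  have hsq1 : (1:ℝ) ≤ Real.sqrt x := by
    have h := Real.sqrt_le_sqrt (show (1:ℝ) ≤ x by linarith)
    simpa using h
  have hsqx : Real.sqrt x ≤ x := by
    nlinarith [Real.sq_sqrt hx0, Real.sqrt_nonneg x]
  set N := ⌊x⌋₊ with hNdef
  set K := ⌊Real.sqrt x⌋₊ with hKdef
  have hN2 : 2 ≤ N := Nat.le_floor (by exact_mod_cast hx)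
  have hNx : (N:ℝ) ≤ x := Nat.floor_le hx0
  have hxN : x < (N:ℝ) + 1 := Nat.lt_floor_add_one x
  have hK1 : 1 ≤ K := Nat.le_floor (by exact_mod_cast hsq1)
  have hKs : (K:ℝ) ≤ Real.sqrt x := Nat.floor_le (Real.sqrt_nonneg x)
  have hsK : Real.sqrt x < (K:ℝ) + 1 := Nat.lt_floor_add_one _
  have hKN : K ≤ N := Nat.floor_le_floor hsqx
  -- antitonicity of k ↦ ⌊x/k⌋₊
  have hAanti : ∀ k : ℕ, 0 < k → ⌊x/((k:ℝ)+1)⌋₊ ≤ ⌊x/(k:ℝ)⌋₊ := by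
    intro k hk
    apply Nat.floor_le_floor
    apply div_le_div_of_nonneg_left hx0 (by exact_mod_cast hk)
    linarith [(by exact_mod_cast hk : (0:ℝ) < (k:ℝ))]
  -- the map n ↦ ⌊x/n⌋₊ maps Icc 1 N to itself
  have hmaps : ∀ n ∈ Finset.Icc 1 N, ⌊x/(n:ℝ)⌋₊ ∈ Finset.Icc 1 N := by
    intro n hn
    rw [Finset.mem_Icc] at hn ⊢
    obtain ⟨h1, h2⟩ := hn
    have hn' : (0:ℝ) < n := by exact_mod_cast h1
    constructor
    · apply Nat.le_floor
      rw [Nat.cast_one, le_div_iff₀ hn', one_mul]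
      calc (n:ℝ) ≤ N := by exact_mod_cast h2
        _ ≤ x := hNx
    · exact Nat.floor_le_floor (div_le_self hx0 (by exact_mod_cast h1))
  -- Step 1: rewrite the sum fiberwise
  have hS : (∑ n ∈ Finset.Icc 1 N, (Nat.totient ⌊x/(n:ℝ)⌋₊ : ℝ)/(⌊x/(n:ℝ)⌋₊:ℝ))
      = ∑ k ∈ Finset.Icc 1 N,
          ((⌊x/(k:ℝ)⌋₊:ℝ) - (⌊x/((k:ℝ)+1)⌋₊:ℝ)) * ((Nat.totient k:ℝ)/(k:ℝ)) := by
    rw [← Finset.sum_fiberwise_of_maps_to hmaps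
      (fun n => (Nat.totient ⌊x/(n:ℝ)⌋₊ : ℝ)/(⌊x/(n:ℝ)⌋₊:ℝ))]
    apply Finset.sum_congr rfl
    intro k hk
    rw [Finset.mem_Icc] at hk
    have hconst : ∀ n ∈ (Finset.Icc 1 N).filter (fun n : ℕ => ⌊x/(n:ℝ)⌋₊ = k),
        (Nat.totient ⌊x/(n:ℝ)⌋₊ : ℝ)/(⌊x/(n:ℝ)⌋₊:ℝ) = (Nat.totient k:ℝ)/(k:ℝ) := by
      intro n hn
      rw [Finset.mem_filter] at hn
      rw [hn.2]
    rw [Finset.sum_congr rfl hconst, fiber_eq hx hk.1, Finset.sum_const, Nat.card_Ioc,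
      nsmul_eq_mul, Nat.cast_sub (hAanti k hk.1)]
  -- Step 2: partial sum of the series
  have hκpart : x * (∑ i ∈ Finset.range N, gg i)
      = ∑ k ∈ Finset.Icc 1 N, ((Nat.totient k:ℝ)/(k:ℝ)) * (x/(k:ℝ) - x/((k:ℝ)+1)) := by
    rw [Finset.mul_sum, show Finset.Icc 1 N = Finset.Ico 1 (N+1) from (Finset.Ico_add_one_right_eq_Icc 1 N).symm,
      Finset.sum_Ico_eq_sum_range]
    simp only [Nat.add_sub_cancel]
    apply Finset.sum_congr rfl
    intro i _
    rw [Nat.add_comm 1 i, gg_def]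
    have h1 : ((i:ℝ)+1) ≠ 0 := by positivity
    have h2 : ((i:ℝ)+2) ≠ 0 := by positivity
    push_cast
    field_simp
    ring
  have hκsplit := Summable.sum_add_tsum_nat_add N summable_gg
  -- tail bound
  have hT_nonneg : 0 ≤ ∑' n : ℕ, gg (n+N) := tsum_nonneg (fun n => gg_nonneg _)
  have hT_le : (∑' n : ℕ, gg (n+N)) ≤ 1/((N:ℝ)+1) := by
    have hs1 : Summable (fun n : ℕ => gg (n+N)) := (summable_nat_add_iff N).mpr summable_gg
    have hs2 := (hasSum_tel N).summable
    have hle : ∀ n : ℕ, gg (n+N) ≤ 1/((n:ℝ)+N+1) - 1/((n:ℝ)+N+2) := by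
      intro n
      have h := gg_le_tel (n+N)
      push_cast at h ⊢
      linarith
    rw [← (hasSum_tel N).tsum_eq]
    exact hs1.tsum_le_tsum hle hs2
  -- decomposition
  have hEq : (∑ n ∈ Finset.Icc 1 N, (Nat.totient ⌊x/(n:ℝ)⌋₊ : ℝ)/(⌊x/(n:ℝ)⌋₊:ℝ))
        - (∑' n : ℕ, gg n) * x
      = (∑ k ∈ Finset.Icc 1 N, ((Nat.totient k:ℝ)/(k:ℝ)) *
          (((⌊x/(k:ℝ)⌋₊:ℝ) - (⌊x/((k:ℝ)+1)⌋₊:ℝ)) - (x/(k:ℝ) - x/((k:ℝ)+1))))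
        - x * (∑' n : ℕ, gg (n+N)) := by
    rw [hS, ← hκsplit, add_mul]
    have e1 : (∑ i ∈ Finset.range N, gg i) * x
        = ∑ k ∈ Finset.Icc 1 N, ((Nat.totient k:ℝ)/(k:ℝ)) * (x/(k:ℝ) - x/((k:ℝ)+1)) := by
      rw [mul_comm]; exact hκpart
    rw [e1]
    have e3 : (∑ k ∈ Finset.Icc 1 N, ((Nat.totient k:ℝ)/(k:ℝ)) *
          (((⌊x/(k:ℝ)⌋₊:ℝ) - (⌊x/((k:ℝ)+1)⌋₊:ℝ)) - (x/(k:ℝ) - x/((k:ℝ)+1))))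
        = (∑ k ∈ Finset.Icc 1 N,
            ((⌊x/(k:ℝ)⌋₊:ℝ) - (⌊x/((k:ℝ)+1)⌋₊:ℝ)) * ((Nat.totient k:ℝ)/(k:ℝ)))
          - ∑ k ∈ Finset.Icc 1 N, ((Nat.totient k:ℝ)/(k:ℝ)) * (x/(k:ℝ) - x/((k:ℝ)+1)) := by
      rw [← Finset.sum_sub_distrib]
      apply Finset.sum_congr rfl
      intro k _
      ring
    rw [e3]
    ring
  -- split the sum at K
  have hsplitKN : (∑ k ∈ Finset.Icc 1 N, ((Nat.totient k:ℝ)/(k:ℝ)) *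
          (((⌊x/(k:ℝ)⌋₊:ℝ) - (⌊x/((k:ℝ)+1)⌋₊:ℝ)) - (x/(k:ℝ) - x/((k:ℝ)+1))))
      = (∑ k ∈ Finset.Ioc 0 K, ((Nat.totient k:ℝ)/(k:ℝ)) *
          (((⌊x/(k:ℝ)⌋₊:ℝ) - (⌊x/((k:ℝ)+1)⌋₊:ℝ)) - (x/(k:ℝ) - x/((k:ℝ)+1))))
        + (∑ k ∈ Finset.Ioc K N, ((Nat.totient k:ℝ)/(k:ℝ)) *
          (((⌊x/(k:ℝ)⌋₊:ℝ) - (⌊x/((k:ℝ)+1)⌋₊:ℝ)) - (x/(k:ℝ) - x/((k:ℝ)+1)))) := by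
    rw [show Finset.Icc 1 N = Finset.Ioc 0 N from Finset.Icc_add_one_left_eq_Ioc 0 N]
    exact (Finset.sum_Ioc_consecutive _ (Nat.zero_le K) hKN).symm
  -- F bounds
  have hF0 : ∀ k : ℕ, 0 ≤ (Nat.totient k:ℝ)/(k:ℝ) := fun k => by positivity
  have hF1 : ∀ k : ℕ, 0 < k → (Nat.totient k:ℝ)/(k:ℝ) ≤ 1 := by
    intro k hk
    rw [div_le_one (by exact_mod_cast hk)]
    exact_mod_cast Nat.totient_le k
  -- bound on the initial segment
  have hbound1 : |∑ k ∈ Finset.Ioc 0 K, ((Nat.totient k:ℝ)/(k:ℝ)) *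
          (((⌊x/(k:ℝ)⌋₊:ℝ) - (⌊x/((k:ℝ)+1)⌋₊:ℝ)) - (x/(k:ℝ) - x/((k:ℝ)+1)))|
      ≤ 2 * Real.sqrt x := by
    calc |∑ k ∈ Finset.Ioc 0 K, ((Nat.totient k:ℝ)/(k:ℝ)) *
          (((⌊x/(k:ℝ)⌋₊:ℝ) - (⌊x/((k:ℝ)+1)⌋₊:ℝ)) - (x/(k:ℝ) - x/((k:ℝ)+1)))|
        ≤ ∑ k ∈ Finset.Ioc 0 K, |((Nat.totient k:ℝ)/(k:ℝ)) *
          (((⌊x/(k:ℝ)⌋₊:ℝ) - (⌊x/((k:ℝ)+1)⌋₊:ℝ)) - (x/(k:ℝ) - x/((k:ℝ)+1)))| :=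
          Finset.abs_sum_le_sum_abs _ _
      _ ≤ ∑ _k ∈ Finset.Ioc 0 K, (2:ℝ) := by
          apply Finset.sum_le_sum
          intro k hk
          rw [Finset.mem_Ioc] at hk
          have hk1 : (0:ℝ) < k := by exact_mod_cast hk.1
          have hc1 : |(⌊x/(k:ℝ)⌋₊:ℝ) - x/(k:ℝ)| ≤ 1 := floor_close (by positivity)
          have hc2 : |(⌊x/((k:ℝ)+1)⌋₊:ℝ) - x/((k:ℝ)+1)| ≤ 1 := floor_close (by positivity)
          rw [abs_mul]
          have habs : |((⌊x/(k:ℝ)⌋₊:ℝ) - (⌊x/((k:ℝ)+1)⌋₊:ℝ)) - (x/(k:ℝ) - x/((k:ℝ)+1))| ≤ 2 := by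
            rw [abs_le] at hc1 hc2 ⊢
            constructor <;> [linarith; linarith]
          calc |(Nat.totient k:ℝ)/(k:ℝ)| * |((⌊x/(k:ℝ)⌋₊:ℝ) - (⌊x/((k:ℝ)+1)⌋₊:ℝ)) - (x/(k:ℝ) - x/((k:ℝ)+1))|
              ≤ 1 * 2 := by
                apply mul_le_mul ?_ habs (abs_nonneg _) zero_le_one
                rw [abs_of_nonneg (hF0 k)]
                exact hF1 k hk.1
            _ = 2 := by norm_num
      _ = (K:ℝ) * 2 := by rw [Finset.sum_const, Nat.card_Ioc, Nat.sub_zero, nsmul_eq_mul]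
      _ ≤ 2 * Real.sqrt x := by nlinarith
  -- bound on the middle segment
  have hbound2 : |∑ k ∈ Finset.Ioc K N, ((Nat.totient k:ℝ)/(k:ℝ)) *
          (((⌊x/(k:ℝ)⌋₊:ℝ) - (⌊x/((k:ℝ)+1)⌋₊:ℝ)) - (x/(k:ℝ) - x/((k:ℝ)+1)))|
      ≤ 2 * Real.sqrt x := by
    have hterm : ∀ k ∈ Finset.Ioc K N, ((Nat.totient k:ℝ)/(k:ℝ)) *
          (((⌊x/(k:ℝ)⌋₊:ℝ) - (⌊x/((k:ℝ)+1)⌋₊:ℝ)) - (x/(k:ℝ) - x/((k:ℝ)+1)))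
        = ((Nat.totient k:ℝ)/(k:ℝ)) * ((⌊x/(k:ℝ)⌋₊:ℝ) - (⌊x/((k:ℝ)+1)⌋₊:ℝ))
          - ((Nat.totient k:ℝ)/(k:ℝ)) * (x/(k:ℝ) - x/((k:ℝ)+1)) := fun k _ => by ring
    rw [Finset.sum_congr rfl hterm, Finset.sum_sub_distrib]
    have hxK1 : x/((K:ℝ)+1) ≤ Real.sqrt x := by
      calc x/((K:ℝ)+1) ≤ x/Real.sqrt x :=
            div_le_div_of_nonneg_left hx0 hsx_pos (le_of_lt hsK)
        _ = Real.sqrt x := Real.div_sqrt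
    -- U bounds
    have hU0 : 0 ≤ ∑ k ∈ Finset.Ioc K N,
        ((Nat.totient k:ℝ)/(k:ℝ)) * ((⌊x/(k:ℝ)⌋₊:ℝ) - (⌊x/((k:ℝ)+1)⌋₊:ℝ)) := by
      apply Finset.sum_nonneg
      intro k hk
      rw [Finset.mem_Ioc] at hk
      have hkpos : 0 < k := lt_of_le_of_lt (Nat.zero_le K) hk.1
      have := hAanti k hkpos
      apply mul_nonneg (hF0 k)
      have : ((⌊x/((k:ℝ)+1)⌋₊:ℕ):ℝ) ≤ ((⌊x/(k:ℝ)⌋₊:ℕ):ℝ) := by exact_mod_cast hAanti k hkpos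
      linarith
    have hU1 : (∑ k ∈ Finset.Ioc K N,
        ((Nat.totient k:ℝ)/(k:ℝ)) * ((⌊x/(k:ℝ)⌋₊:ℝ) - (⌊x/((k:ℝ)+1)⌋₊:ℝ))) ≤ Real.sqrt x := by
      calc (∑ k ∈ Finset.Ioc K N,
            ((Nat.totient k:ℝ)/(k:ℝ)) * ((⌊x/(k:ℝ)⌋₊:ℝ) - (⌊x/((k:ℝ)+1)⌋₊:ℝ)))
          ≤ ∑ k ∈ Finset.Ioc K N, ((⌊x/(k:ℝ)⌋₊:ℝ) - (⌊x/((k:ℝ)+1)⌋₊:ℝ)) := by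
            apply Finset.sum_le_sum
            intro k hk
            rw [Finset.mem_Ioc] at hk
            have hkpos : 0 < k := lt_of_le_of_lt (Nat.zero_le K) hk.1
            have hd : 0 ≤ (⌊x/(k:ℝ)⌋₊:ℝ) - (⌊x/((k:ℝ)+1)⌋₊:ℝ) := by
              have : ((⌊x/((k:ℝ)+1)⌋₊:ℕ):ℝ) ≤ ((⌊x/(k:ℝ)⌋₊:ℕ):ℝ) := by
                exact_mod_cast hAanti k hkpos
              linarith
            exact mul_le_of_le_one_left hd (hF1 k hkpos)
        _ = ∑ k ∈ Finset.Ioc K N,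
            ((fun j : ℕ => (⌊x/(j:ℝ)⌋₊:ℝ)) k - (fun j : ℕ => (⌊x/(j:ℝ)⌋₊:ℝ)) (k+1)) := by
            apply Finset.sum_congr rfl
            intro k _
            simp only []
            congr 3
            push_cast
            ring
        _ = (⌊x/((K+1:ℕ):ℝ)⌋₊:ℝ) - (⌊x/((N+1:ℕ):ℝ)⌋₊:ℝ) := sum_Ioc_telescope _ hKN
        _ ≤ (⌊x/((K+1:ℕ):ℝ)⌋₊:ℝ) := by
            have : (0:ℝ) ≤ (⌊x/((N+1:ℕ):ℝ)⌋₊:ℝ) := by positivity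
            linarith
        _ ≤ x/((K:ℝ)+1) := by
            have h1 : (0:ℝ) ≤ x/((K+1:ℕ):ℝ) := by positivity
            have := Nat.floor_le h1
            push_cast at this ⊢
            linarith
        _ ≤ Real.sqrt x := hxK1
    -- V bounds
    have hV0 : 0 ≤ ∑ k ∈ Finset.Ioc K N,
        ((Nat.totient k:ℝ)/(k:ℝ)) * (x/(k:ℝ) - x/((k:ℝ)+1)) := by
      apply Finset.sum_nonneg
      intro k hk
      rw [Finset.mem_Ioc] at hk
      have hkpos : (0:ℝ) < k := by exact_mod_cast lt_of_le_of_lt (Nat.zero_le K) hk.1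
      apply mul_nonneg (hF0 k)
      have : x/((k:ℝ)+1) ≤ x/(k:ℝ) :=
        div_le_div_of_nonneg_left hx0 hkpos (by linarith)
      linarith
    have hV1 : (∑ k ∈ Finset.Ioc K N,
        ((Nat.totient k:ℝ)/(k:ℝ)) * (x/(k:ℝ) - x/((k:ℝ)+1))) ≤ Real.sqrt x := by
      calc (∑ k ∈ Finset.Ioc K N, ((Nat.totient k:ℝ)/(k:ℝ)) * (x/(k:ℝ) - x/((k:ℝ)+1)))
          ≤ ∑ k ∈ Finset.Ioc K N, (x/(k:ℝ) - x/((k:ℝ)+1)) := by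
            apply Finset.sum_le_sum
            intro k hk
            rw [Finset.mem_Ioc] at hk
            have hkpos : 0 < k := lt_of_le_of_lt (Nat.zero_le K) hk.1
            have hkpos' : (0:ℝ) < k := by exact_mod_cast hkpos
            have hd : 0 ≤ x/(k:ℝ) - x/((k:ℝ)+1) := by
              have : x/((k:ℝ)+1) ≤ x/(k:ℝ) :=
                div_le_div_of_nonneg_left hx0 hkpos' (by linarith)
              linarith
            exact mul_le_of_le_one_left hd (hF1 k hkpos)
        _ = ∑ k ∈ Finset.Ioc K N,
            ((fun j : ℕ => x/(j:ℝ)) k - (fun j : ℕ => x/(j:ℝ)) (k+1)) := by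
            apply Finset.sum_congr rfl
            intro k _
            simp only []
            congr 2
            push_cast
            ring
        _ = x/((K+1:ℕ):ℝ) - x/((N+1:ℕ):ℝ) := sum_Ioc_telescope _ hKN
        _ ≤ x/((K+1:ℕ):ℝ) := by
            have : (0:ℝ) ≤ x/((N+1:ℕ):ℝ) := by positivity
            linarith
        _ ≤ Real.sqrt x := by
            push_cast
            exact hxK1
    rw [abs_le]
    constructor <;> [linarith; linarith]
  -- tail bound
  have hbound3 : |x * (∑' n : ℕ, gg (n+N))| ≤ Real.sqrt x := by
    rw [abs_of_nonneg (mul_nonneg hx0 hT_nonneg)]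
    calc x * (∑' n : ℕ, gg (n+N)) ≤ x * (1/((N:ℝ)+1)) :=
          mul_le_mul_of_nonneg_left hT_le hx0
      _ ≤ 1 := by
          rw [mul_one_div, div_le_one (by positivity)]
          linarith
      _ ≤ Real.sqrt x := hsq1
  -- assemble
  rw [hEq, hsplitKN]
  rw [abs_le] at hbound1 hbound2 hbound3 ⊢
  constructor <;> [linarith; linarith]
end

section
/- For every real λ with 0 < λ < 2 there exists κ > 0 such that ∑_{n ≤ x} λ^{Ω(⌊x/n⌋)} = x·∑_{n=1}^∞ λ^{Ω(n)}/(n(n+1)) + O(x^{1−κ}) as x → ∞; in particular the series ∑_{n=1}^∞ λ^{Ω(n)}/(n(n+1)) converges. -/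
set_option maxHeartbeats 1000000

open Finset Real ArithmeticFunction

private lemma two_pow_length_le_prod (l : List ℕ) (h : ∀ p ∈ l, 2 ≤ p) :
    2 ^ l.length ≤ l.prod := by
  induction l with
  | nil => simp
  | cons a t ih =>
    simp only [List.length_cons, List.prod_cons, pow_succ]
    have h1 : 2 ^ t.length ≤ t.prod := ih fun p hp => h p (List.mem_cons_of_mem a hp)
    have h2 : 2 ≤ a := h a List.mem_cons_self
    calc 2 ^ t.length * 2 ≤ t.prod * a := Nat.mul_le_mul h1 h2
    _ = a * t.prod := Nat.mul_comm _ _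

private lemma two_pow_omega_le (m : ℕ) (hm : m ≠ 0) : 2 ^ (cardFactors m) ≤ m := by
  rw [cardFactors_apply]
  calc 2 ^ m.primeFactorsList.length ≤ m.primeFactorsList.prod :=
        two_pow_length_le_prod _ (fun p hp => (Nat.prime_of_mem_primeFactorsList hp).two_le)
  _ = m := Nat.prod_primeFactorsList hm

private lemma pow_omega_le (lam : ℝ) (hlam0 : 0 < lam) (m : ℕ) (hm : m ≠ 0) :
    lam ^ (cardFactors m) ≤ (m : ℝ) ^ (Real.logb 2 (max 1 lam)) := by
  set α := Real.logb 2 (max 1 lam) with hα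
  set k := cardFactors m with hk
  have hmax1 : (1:ℝ) ≤ max 1 lam := le_max_left _ _
  have hmaxpos : (0:ℝ) < max 1 lam := lt_of_lt_of_le one_pos hmax1
  have hαnn : 0 ≤ α := Real.logb_nonneg one_lt_two hmax1
  have h1 : lam ^ k ≤ (max 1 lam) ^ k := pow_le_pow_left₀ hlam0.le (le_max_right _ _) _
  have h2 : (max 1 lam) ^ k = ((2:ℝ) ^ k) ^ α := by
    rw [← Real.rpow_logb two_pos (by norm_num) hmaxpos, ← hα,
      ← Real.rpow_mul_natCast (by norm_num : (0:ℝ) ≤ 2),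
      mul_comm, Real.rpow_natCast_mul (by norm_num : (0:ℝ) ≤ 2)]
  have h3 : ((2:ℝ) ^ k) ^ α ≤ (m:ℝ) ^ α := by
    apply Real.rpow_le_rpow (by positivity) _ hαnn
    exact_mod_cast two_pow_omega_le m hm
  linarith [h1, h2.le, h3]

private lemma alpha_nonneg (lam : ℝ) : 0 ≤ Real.logb 2 (max 1 lam) :=
  Real.logb_nonneg one_lt_two (le_max_left _ _)

private lemma alpha_lt_one (lam : ℝ) (hlam2 : lam < 2) : Real.logb 2 (max 1 lam) < 1 := by
  have h : max 1 lam < 2 := max_lt one_lt_two hlam2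
  calc Real.logb 2 (max 1 lam) < Real.logb 2 2 :=
        Real.logb_lt_logb one_lt_two (lt_of_lt_of_le one_pos (le_max_left _ _)) h
  _ = 1 := Real.logb_self_eq_one one_lt_two

private lemma summable_rpow_shift (c : ℝ) (hc : c < -1) :
    Summable (fun n : ℕ => ((n:ℝ) + 1) ^ c) := by
  have h : Summable (fun n : ℕ => ((n:ℝ)) ^ c) := (Real.summable_nat_rpow).mpr hc
  have h2 := (summable_nat_add_iff 1).mpr h
  refine h2.congr fun n => ?_
  push_cast
  ring_nf

private lemma term_le (lam : ℝ) (hlam0 : 0 < lam) (n : ℕ) :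
    lam ^ (cardFactors (n + 1)) / (((n : ℝ) + 1) * ((n : ℝ) + 2)) ≤
      ((n:ℝ) + 1) ^ (Real.logb 2 (max 1 lam) - 2) := by
  set α := Real.logb 2 (max 1 lam) with hα
  have hpos : (0:ℝ) < (n:ℝ) + 1 := by positivity
  have hnum : lam ^ (cardFactors (n + 1)) ≤ ((n:ℝ)+1) ^ α := by
    have := pow_omega_le lam hlam0 (n+1) (Nat.succ_ne_zero n)
    push_cast at this
    exact this
  have hden : ((n:ℝ)+1)^(2:ℕ) ≤ ((n:ℝ)+1) * ((n:ℝ)+2) := by nlinarith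
  calc lam ^ (cardFactors (n + 1)) / (((n : ℝ) + 1) * ((n : ℝ) + 2))
      ≤ ((n:ℝ)+1) ^ α / (((n:ℝ)+1)^(2:ℕ)) := by
        apply div_le_div₀ (by positivity) hnum (by positivity) hden
  _ = ((n:ℝ)+1) ^ (α - 2) := by
        rw [Real.rpow_sub hpos, Real.rpow_two]

private lemma term_nonneg (lam : ℝ) (hlam0 : 0 < lam) (n : ℕ) :
    0 ≤ lam ^ (cardFactors (n + 1)) / (((n : ℝ) + 1) * ((n : ℝ) + 2)) := by positivity

private lemma summable_T (lam : ℝ) (hlam0 : 0 < lam) (hlam2 : lam < 2) :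
    Summable (fun n : ℕ =>
      lam ^ (cardFactors (n + 1)) / (((n : ℝ) + 1) * ((n : ℝ) + 2))) := by
  apply Summable.of_nonneg_of_le (term_nonneg lam hlam0) (term_le lam hlam0)
  exact summable_rpow_shift _ (by linarith [alpha_lt_one lam hlam2])

private lemma tail_bound (lam : ℝ) (hlam0 : 0 < lam) (hlam2 : lam < 2) (M : ℕ) (hM : 1 ≤ M) :
    (∑' n : ℕ, lam ^ (cardFactors (n + M + 1)) / (((n:ℝ) + M + 1) * ((n:ℝ) + M + 2))) ≤
      (∑' n : ℕ, ((n:ℝ) + 1) ^ ((Real.logb 2 (max 1 lam) - 3)/2)) *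
        (M:ℝ) ^ ((Real.logb 2 (max 1 lam) - 1)/2) := by
  set α := Real.logb 2 (max 1 lam) with hα
  have hα0 := alpha_nonneg lam
  have hα1 := alpha_lt_one lam hlam2
  have hMpos : (0:ℝ) < M := by exact_mod_cast hM
  have hsum3 : Summable (fun n : ℕ => ((n:ℝ) + 1) ^ ((α - 3)/2)) :=
    summable_rpow_shift _ (by linarith)
  have key : ∀ n : ℕ, lam ^ (cardFactors (n + M + 1)) / (((n:ℝ) + M + 1) * ((n:ℝ) + M + 2)) ≤
      ((n:ℝ) + 1) ^ ((α - 3)/2) * (M:ℝ) ^ ((α - 1)/2) := by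
    intro n
    have h1 : lam ^ (cardFactors ((n + M) + 1)) / ((((n+M:ℕ):ℝ) + 1) * (((n+M:ℕ):ℝ) + 2)) ≤
        (((n+M:ℕ):ℝ) + 1) ^ (α - 2) := term_le lam hlam0 (n + M)
    have hb : (0:ℝ) < ((n+M:ℕ):ℝ) + 1 := by positivity
    have h2 : (((n+M:ℕ):ℝ) + 1) ^ (α - 2) =
        (((n+M:ℕ):ℝ) + 1) ^ ((α-3)/2) * (((n+M:ℕ):ℝ) + 1) ^ ((α-1)/2) := by
      rw [← Real.rpow_add hb]; ring_nf
    have h3 : (((n+M:ℕ):ℝ) + 1) ^ ((α-3)/2) ≤ ((n:ℝ) + 1) ^ ((α-3)/2) := by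
      apply Real.rpow_le_rpow_of_nonpos (by positivity) _ (by linarith)
      push_cast; linarith
    have h4 : (((n+M:ℕ):ℝ) + 1) ^ ((α-1)/2) ≤ (M:ℝ) ^ ((α-1)/2) := by
      apply Real.rpow_le_rpow_of_nonpos hMpos _ (by linarith)
      push_cast; linarith
    calc lam ^ (cardFactors (n + M + 1)) / (((n:ℝ) + M + 1) * ((n:ℝ) + M + 2))
        = lam ^ (cardFactors ((n + M) + 1)) / ((((n+M:ℕ):ℝ) + 1) * (((n+M:ℕ):ℝ) + 2)) := by
          push_cast; ring_nf
    _ ≤ (((n+M:ℕ):ℝ) + 1) ^ (α - 2) := h1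
    _ = (((n+M:ℕ):ℝ) + 1) ^ ((α-3)/2) * (((n+M:ℕ):ℝ) + 1) ^ ((α-1)/2) := h2
    _ ≤ ((n:ℝ) + 1) ^ ((α-3)/2) * (M:ℝ) ^ ((α-1)/2) := by
          apply mul_le_mul h3 h4 (by positivity) (by positivity)
  calc (∑' n : ℕ, lam ^ (cardFactors (n + M + 1)) / (((n:ℝ) + M + 1) * ((n:ℝ) + M + 2)))
      ≤ ∑' n : ℕ, ((n:ℝ) + 1) ^ ((α - 3)/2) * (M:ℝ) ^ ((α - 1)/2) := by
        apply Summable.tsum_le_tsum key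
        · have := (summable_nat_add_iff M).mpr (summable_T lam hlam0 hlam2)
          refine this.congr fun n => ?_
          push_cast; ring_nf
        · exact hsum3.mul_right _
  _ = (∑' n : ℕ, ((n:ℝ) + 1) ^ ((α - 3)/2)) * (M:ℝ) ^ ((α - 1)/2) := tsum_mul_right

private lemma floor_div_eq_iff (x : ℝ) (hx : 0 ≤ x) (n m : ℕ) (hn : 0 < n) (hm : 0 < m) :
    ⌊x / (n:ℝ)⌋₊ = m ↔ (⌊x / ((m:ℝ)+1)⌋₊ < n ∧ n ≤ ⌊x / (m:ℝ)⌋₊) := by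
  have hn' : (0:ℝ) < n := by exact_mod_cast hn
  have hm' : (0:ℝ) < m := by exact_mod_cast hm
  rw [Nat.floor_eq_iff (by positivity), Nat.floor_lt (by positivity),
    Nat.le_floor_iff (by positivity), div_lt_iff₀ (by positivity),
    le_div_iff₀ hm', le_div_iff₀ hn', div_lt_iff₀ (by positivity : (0:ℝ) < (m:ℝ)+1)]
  constructor
  · rintro ⟨h1, h2⟩; constructor <;> nlinarith
  · rintro ⟨h1, h2⟩; constructor <;> nlinarith

private lemma floor_div_antitone (x : ℝ) (hx : 0 ≤ x) (a b : ℕ) (ha : 0 < a) (hab : a ≤ b) :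
    ⌊x / (b:ℝ)⌋₊ ≤ ⌊x / (a:ℝ)⌋₊ := by
  apply Nat.floor_le_floor
  apply div_le_div_of_nonneg_left hx (by exact_mod_cast ha)
  exact_mod_cast hab

private lemma key_identity (lam : ℝ) (x : ℝ) (hx : 1 ≤ x) (M : ℕ) :
    ∑ n ∈ Finset.Ioc ⌊x / ((M:ℝ)+1)⌋₊ ⌊x⌋₊, lam ^ (cardFactors ⌊x / (n:ℝ)⌋₊) =
    ∑ m ∈ Finset.Icc 1 M,
      ((⌊x / (m:ℝ)⌋₊ : ℝ) - (⌊x / ((m:ℝ)+1)⌋₊ : ℝ)) * lam ^ (cardFactors m) := by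
  have hx0 : (0:ℝ) ≤ x := by linarith
  induction M with
  | zero => simp
  | succ M ih =>
    have e1 : (M:ℝ)+1 = ((M+1:ℕ):ℝ) := by push_cast; ring
    have e2 : ((M+1:ℕ):ℝ)+1 = ((M+2:ℕ):ℝ) := by push_cast; ring
    rw [e1] at ih
    rw [e2]
    have hfloor1 : ⌊x / ((1:ℕ):ℝ)⌋₊ = ⌊x⌋₊ := by norm_num
    have h1 : ⌊x / ((M+1:ℕ):ℝ)⌋₊ ≤ ⌊x⌋₊ := by
      rw [← hfloor1]
      exact floor_div_antitone x hx0 1 (M+1) one_pos (by omega)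
    have h2 : ⌊x / ((M+2:ℕ):ℝ)⌋₊ ≤ ⌊x / ((M+1:ℕ):ℝ)⌋₊ :=
      floor_div_antitone x hx0 (M+1) (M+2) (by omega) (by omega)
    rw [← Finset.sum_Ioc_consecutive (fun n => lam ^ (cardFactors ⌊x / (n:ℝ)⌋₊)) h2 h1]
    have hconst : ∑ n ∈ Finset.Ioc ⌊x / ((M+2:ℕ):ℝ)⌋₊ ⌊x / ((M+1:ℕ):ℝ)⌋₊,
        lam ^ (cardFactors ⌊x / (n:ℝ)⌋₊) =
        ((⌊x / ((M+1:ℕ):ℝ)⌋₊ : ℝ) - (⌊x / ((M+2:ℕ):ℝ)⌋₊ : ℝ)) * lam ^ (cardFactors (M+1)) := by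
      rw [Finset.sum_congr rfl (fun n hn => ?_), Finset.sum_const, Nat.card_Ioc,
        nsmul_eq_mul, Nat.cast_sub h2]
      rw [Finset.mem_Ioc] at hn
      have hn1 : 0 < n := by omega
      have : ⌊x / (n:ℝ)⌋₊ = M+1 := by
        rw [floor_div_eq_iff x hx0 n (M+1) hn1 (by omega)]
        push_cast at hn ⊢
        rw [show (M:ℝ) + 1 + 1 = (M:ℝ) + 2 by ring]
        exact hn
      rw [this]
    rw [hconst, ih, Finset.sum_Icc_succ_top (by omega : 1 ≤ M+1)]
    rw [e2]
    ring

private lemma sum_rpow_neg_le (p : ℝ) (hp0 : 0 < p) (hp1 : p ≤ 1) (K : ℕ) :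
    ∑ n ∈ Finset.Icc 1 K, (n:ℝ) ^ (p - 1) ≤ (K:ℝ) ^ p / p := by
  induction K with
  | zero => simp [Real.zero_rpow hp0.ne']
  | succ K ih =>
    rw [Finset.sum_Icc_succ_top (by omega : 1 ≤ K+1)]
    have hKpos : (0:ℝ) < (K:ℝ) + 1 := by positivity
    have hs : (-1:ℝ) ≤ -1/((K:ℝ)+1) := by
      rw [neg_div, neg_le_neg_iff]
      rw [div_le_one hKpos]; linarith [Nat.cast_nonneg (α := ℝ) K]
    have hbern := rpow_one_add_le_one_add_mul_self hs hp0.le hp1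
    have he : (1:ℝ) + -1/((K:ℝ)+1) = (K:ℝ)/((K:ℝ)+1) := by field_simp; ring
    rw [he] at hbern
    -- multiply by ((K:ℝ)+1)^p
    have hpow : ((K:ℝ)/((K:ℝ)+1)) ^ p * ((K:ℝ)+1) ^ p = (K:ℝ) ^ p := by
      rw [← Real.mul_rpow (by positivity) (by positivity)]
      congr 1; field_simp
    have hmul : ((K:ℝ)/((K:ℝ)+1)) ^ p * ((K:ℝ)+1) ^ p ≤
        (1 + p * (-1/((K:ℝ)+1))) * ((K:ℝ)+1) ^ p :=
      mul_le_mul_of_nonneg_right hbern (by positivity)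
    have hp1' : ((K:ℝ)+1) ^ (p-1) = ((K:ℝ)+1) ^ p / ((K:ℝ)+1) := by
      rw [Real.rpow_sub hKpos, Real.rpow_one]
    have hexp : (1 + p * (-1/((K:ℝ)+1))) * ((K:ℝ)+1) ^ p =
        ((K:ℝ)+1) ^ p - p * ((K:ℝ)+1) ^ (p-1) := by
      rw [hp1']; field_simp; ring
    have hkey : (K:ℝ) ^ p + p * ((K:ℝ)+1) ^ (p-1) ≤ ((K:ℝ)+1) ^ p := by
      rw [hpow] at hmul; rw [hexp] at hmul; linarith
    have hcast : ((K+1:ℕ):ℝ) = (K:ℝ) + 1 := by push_cast; ring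
    rw [hcast]
    have hfin : (K:ℝ)^p/p + ((K:ℝ)+1)^(p-1) ≤ ((K:ℝ)+1)^p/p := by
      rw [div_add' _ _ _ hp0.ne', div_le_div_iff₀ hp0 hp0]
      nlinarith
    linarith

private lemma head_bound (lam x : ℝ) (hlam0 : 0 < lam) (hlam2 : lam < 2) (hx : 1 ≤ x)
    (K : ℕ) (hKx : (K:ℝ) ≤ x) :
    ∑ n ∈ Finset.Icc 1 K, lam ^ (cardFactors ⌊x / (n:ℝ)⌋₊) ≤
      x ^ (Real.logb 2 (max 1 lam)) *
        ((K:ℝ) ^ (1 - Real.logb 2 (max 1 lam)) / (1 - Real.logb 2 (max 1 lam))) := by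
  set α := Real.logb 2 (max 1 lam) with hα
  have hα0 := alpha_nonneg lam
  have hα1 := alpha_lt_one lam hlam2
  have hx0 : (0:ℝ) < x := by linarith
  have step : ∀ n ∈ Finset.Icc 1 K, lam ^ (cardFactors ⌊x / (n:ℝ)⌋₊) ≤
      x ^ α * (n:ℝ) ^ ((1-α) - 1) := by
    intro n hn
    rw [Finset.mem_Icc] at hn
    have hn1 : (1:ℝ) ≤ (n:ℝ) := by exact_mod_cast hn.1
    have hnx : (n:ℝ) ≤ x := le_trans (by exact_mod_cast hn.2) hKx
    have hnpos : (0:ℝ) < n := by linarith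
    have hfl : 1 ≤ ⌊x / (n:ℝ)⌋₊ := by
      apply Nat.le_floor
      rw [Nat.cast_one, le_div_iff₀ hnpos]; linarith
    have h1 : lam ^ (cardFactors ⌊x / (n:ℝ)⌋₊) ≤ ((⌊x / (n:ℝ)⌋₊ : ℕ):ℝ) ^ α :=
      pow_omega_le lam hlam0 _ (by omega)
    have h3 : ((⌊x / (n:ℝ)⌋₊ : ℕ):ℝ) ^ α ≤ (x / (n:ℝ)) ^ α :=
      Real.rpow_le_rpow (by positivity) (Nat.floor_le (by positivity)) hα0
    have h4 : (x / (n:ℝ)) ^ α = x ^ α * (n:ℝ) ^ ((1-α) - 1) := by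
      rw [Real.div_rpow hx0.le (Nat.cast_nonneg n), div_eq_mul_inv,
        ← Real.rpow_neg (Nat.cast_nonneg n), show -α = (1-α)-1 by ring]
    linarith
  calc ∑ n ∈ Finset.Icc 1 K, lam ^ (cardFactors ⌊x / (n:ℝ)⌋₊)
      ≤ ∑ n ∈ Finset.Icc 1 K, x ^ α * (n:ℝ) ^ ((1-α) - 1) := Finset.sum_le_sum step
  _ = x ^ α * ∑ n ∈ Finset.Icc 1 K, (n:ℝ) ^ ((1-α) - 1) := by rw [Finset.mul_sum]
  _ ≤ x ^ α * ((K:ℝ) ^ (1-α) / (1-α)) := by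
      apply mul_le_mul_of_nonneg_left
        (sum_rpow_neg_le (1-α) (by linarith) (by linarith) K) (by positivity)

/-- For every `0 < λ < 2` there exists `κ > 0` with
`∑_{n ≤ x} λ^{Ω(⌊x/n⌋)} = x·∑_{n ≥ 1} λ^{Ω(n)}/(n(n+1)) + O(x^{1−κ})`;
in particular the series converges. -/
theorem sum_lambda_pow_Omega_floor_div (lam : ℝ) (hlam0 : 0 < lam) (hlam2 : lam < 2) :
    Summable (fun n : ℕ =>
      lam ^ (cardFactors (n + 1)) / (((n : ℝ) + 1) * ((n : ℝ) + 2))) ∧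
    ∃ κ : ℝ, 0 < κ ∧ ∃ C : ℝ, 0 < C ∧ ∃ x₀ : ℝ, ∀ x : ℝ, x₀ ≤ x →
      |(∑ n ∈ Finset.Icc 1 ⌊x⌋₊, lam ^ (cardFactors ⌊x / (n : ℝ)⌋₊)) -
          x * ∑' n : ℕ,
            lam ^ (cardFactors (n + 1)) / (((n : ℝ) + 1) * ((n : ℝ) + 2))| ≤
        C * x ^ (1 - κ) := by
  have hsummable := summable_T lam hlam0 hlam2
  refine ⟨hsummable, ?_⟩
  set α := Real.logb 2 (max 1 lam) with hα
  have hα0 : (0:ℝ) ≤ α := alpha_nonneg lam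
  have hα1 : α < 1 := alpha_lt_one lam hlam2
  have h1α : (0:ℝ) < 1 - α := by linarith
  set T : ℕ → ℝ := fun n => lam ^ (cardFactors (n + 1)) / (((n : ℝ) + 1) * ((n : ℝ) + 2))
    with hT
  set C₃ : ℝ := ∑' n : ℕ, ((n:ℝ) + 1) ^ ((α - 3)/2) with hC₃
  have hC₃0 : 0 ≤ C₃ := tsum_nonneg (fun n => Real.rpow_nonneg (by positivity) _)
  refine ⟨(1-α)/4, by linarith, 1/(1-α) + 2 + C₃ * (2:ℝ) ^ ((1-α)/2), ?_, 4, ?_⟩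
  · have h1 : (0:ℝ) < 1/(1-α) := by positivity
    have h2 : (0:ℝ) ≤ C₃ * (2:ℝ) ^ ((1-α)/2) :=
      mul_nonneg hC₃0 (Real.rpow_nonneg (by norm_num) _)
    linarith
  intro x hx
  have hx1 : (1:ℝ) ≤ x := by linarith
  have hx0 : (0:ℝ) < x := by linarith
  set sx := Real.sqrt x with hsx
  have hsx2 : (2:ℝ) ≤ sx := by
    rw [hsx, show (2:ℝ) = Real.sqrt 4 by
      rw [show (4:ℝ) = 2^2 by norm_num, Real.sqrt_sq (by norm_num)]]
    exact Real.sqrt_le_sqrt hx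
  have hsxpos : (0:ℝ) < sx := by linarith
  have hsq : sx * sx = x := Real.mul_self_sqrt hx0.le
  set M := ⌊sx⌋₊ with hM
  have hM1 : 1 ≤ M := by
    rw [hM]; exact Nat.le_floor (by exact_mod_cast (by linarith : (1:ℝ) ≤ sx))
  have hMle : (M:ℝ) ≤ sx := Nat.floor_le hsxpos.le
  have hMge : sx - 1 ≤ (M:ℝ) := by
    have := Nat.lt_floor_add_one sx; linarith
  have hMhalf : sx/2 ≤ (M:ℝ) := by linarith
  have hMpos : (0:ℝ) < M := by linarith
  set K := ⌊x / ((M:ℝ)+1)⌋₊ with hK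
  set N := ⌊x⌋₊ with hN
  have hKle : (K:ℝ) ≤ sx := by
    have h1 : (K:ℝ) ≤ x/((M:ℝ)+1) := Nat.floor_le (by positivity)
    have h2 : x/((M:ℝ)+1) ≤ x/sx := by
      apply div_le_div_of_nonneg_left hx0.le hsxpos; linarith
    have h3 : x/sx = sx := by field_simp [hsxpos.ne']; linarith [hsq]
    linarith
  have hsxx : sx ≤ x := by nlinarith
  have hKx : (K:ℝ) ≤ x := by linarith
  have hKN : K ≤ N := by
    apply Nat.floor_le_floor
    apply div_le_self hx0.le; linarith
  -- split the sum
  have hsplit : (∑ n ∈ Finset.Icc 1 N, lam ^ (cardFactors ⌊x / (n : ℝ)⌋₊)) =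
      (∑ n ∈ Finset.Icc 1 K, lam ^ (cardFactors ⌊x / (n : ℝ)⌋₊)) +
      (∑ n ∈ Finset.Ioc K N, lam ^ (cardFactors ⌊x / (n : ℝ)⌋₊)) := by
    have e : ∀ t : ℕ, Finset.Icc 1 t = Finset.Ioc 0 t := by
      intro t; ext y; simp; omega
    rw [e N, e K]
    exact (Finset.sum_Ioc_consecutive _ (Nat.zero_le K) hKN).symm
  have hmid := key_identity lam x hx1 M
  -- approximation of middle sum
  set g : ℕ → ℝ := fun m => lam ^ (cardFactors m) / ((m:ℝ) * ((m:ℝ)+1)) with hg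
  have happrox : |(∑ m ∈ Finset.Icc 1 M,
      ((⌊x / (m:ℝ)⌋₊ : ℝ) - (⌊x / ((m:ℝ)+1)⌋₊ : ℝ)) * lam ^ (cardFactors m)) -
      x * ∑ m ∈ Finset.Icc 1 M, g m| ≤ 2 * M * (M:ℝ)^α := by
    rw [Finset.mul_sum, ← Finset.sum_sub_distrib]
    calc |∑ m ∈ Finset.Icc 1 M,
        (((⌊x / (m:ℝ)⌋₊ : ℝ) - (⌊x / ((m:ℝ)+1)⌋₊ : ℝ)) * lam ^ (cardFactors m) - x * g m)|
        ≤ ∑ m ∈ Finset.Icc 1 M,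
          |((⌊x / (m:ℝ)⌋₊ : ℝ) - (⌊x / ((m:ℝ)+1)⌋₊ : ℝ)) * lam ^ (cardFactors m) - x * g m| :=
          Finset.abs_sum_le_sum_abs _ _
    _ ≤ ∑ m ∈ Finset.Icc 1 M, 2 * (M:ℝ)^α := by
        apply Finset.sum_le_sum
        intro m hm
        rw [Finset.mem_Icc] at hm
        have hm1 : (1:ℝ) ≤ (m:ℝ) := by exact_mod_cast hm.1
        have hmM : (m:ℝ) ≤ (M:ℝ) := by exact_mod_cast hm.2
        have hmpos : (0:ℝ) < m := by linarith
        have hq : x * g m = (x/((m:ℝ)*((m:ℝ)+1))) * lam ^ (cardFactors m) := by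
          rw [hg]; field_simp
        have hfac : ((⌊x / (m:ℝ)⌋₊ : ℝ) - (⌊x / ((m:ℝ)+1)⌋₊ : ℝ)) * lam ^ (cardFactors m) -
            x * g m = ((⌊x / (m:ℝ)⌋₊ : ℝ) - (⌊x / ((m:ℝ)+1)⌋₊ : ℝ) -
            x/((m:ℝ)*((m:ℝ)+1))) * lam ^ (cardFactors m) := by
          rw [hq]; ring
        rw [hfac, abs_mul]
        have hlampow : |lam ^ (cardFactors m)| ≤ (M:ℝ)^α := by
          rw [abs_of_pos (pow_pos hlam0 _)]
          calc lam ^ (cardFactors m) ≤ (m:ℝ)^α := pow_omega_le lam hlam0 m (by omega)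
          _ ≤ (M:ℝ)^α := Real.rpow_le_rpow (by positivity) hmM hα0
        have habs2 : |(⌊x / (m:ℝ)⌋₊ : ℝ) - (⌊x / ((m:ℝ)+1)⌋₊ : ℝ) -
            x/((m:ℝ)*((m:ℝ)+1))| ≤ 2 := by
          have hfa : (⌊x / (m:ℝ)⌋₊ : ℝ) ≤ x/(m:ℝ) := Nat.floor_le (by positivity)
          have hfb : x/(m:ℝ) < (⌊x / (m:ℝ)⌋₊ : ℝ) + 1 := Nat.lt_floor_add_one _
          have hfc : (⌊x / ((m:ℝ)+1)⌋₊ : ℝ) ≤ x/((m:ℝ)+1) := Nat.floor_le (by positivity)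
          have hfd : x/((m:ℝ)+1) < (⌊x / ((m:ℝ)+1)⌋₊ : ℝ) + 1 := Nat.lt_floor_add_one _
          have hdiff : x/(m:ℝ) - x/((m:ℝ)+1) = x/((m:ℝ)*((m:ℝ)+1)) := by
            field_simp; ring
          rw [abs_le]; constructor <;> nlinarith
        exact mul_le_mul habs2 hlampow (abs_nonneg _) (by norm_num)
    _ = 2 * M * (M:ℝ)^α := by
        rw [Finset.sum_const, Nat.card_Icc]
        simp only [nsmul_eq_mul]
        push_cast [Nat.add_sub_cancel]
        ring
  -- partial sum vs tsum
  have hreindex : (∑ n ∈ Finset.range M, T n) = ∑ m ∈ Finset.Icc 1 M, g m := by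
    rw [← Finset.Ico_add_one_right_eq_Icc, Finset.sum_Ico_eq_sum_range]
    apply Finset.sum_congr (by norm_num)
    intro i _
    rw [hg, hT]
    simp only
    rw [show 1 + i = i + 1 by ring]
    push_cast
    ring_nf
  have hps := Summable.sum_add_tsum_nat_add (f := T) M hsummable
  set tail := ∑' n : ℕ, T (n + M) with htail
  have htail0 : 0 ≤ tail :=
    tsum_nonneg (fun n => term_nonneg lam hlam0 _)
  have htailbd : tail ≤ C₃ * (M:ℝ) ^ ((α-1)/2) := by
    have hconv : tail = ∑' n : ℕ,
        lam ^ (cardFactors (n + M + 1)) / (((n:ℝ) + M + 1) * ((n:ℝ) + M + 2)) := by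
      rw [htail]
      apply tsum_congr
      intro n
      rw [hT]
      simp only
      push_cast
      ring_nf
    rw [hconv]
    exact tail_bound lam hlam0 hlam2 M hM1
  -- head bound
  have hhead0 : 0 ≤ ∑ n ∈ Finset.Icc 1 K, lam ^ (cardFactors ⌊x / (n : ℝ)⌋₊) :=
    Finset.sum_nonneg (fun n _ => (pow_pos hlam0 _).le)
  have hheadbd := head_bound lam x hlam0 hlam2 hx1 K hKx
  -- convert everything to powers of x
  have hsxr : sx = x ^ (1/2 : ℝ) := Real.sqrt_eq_rpow x
  have hxhalf : ∀ c : ℝ, sx ^ c = x ^ (c/2) := by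
    intro c
    rw [hsxr, ← Real.rpow_mul hx0.le]
    ring_nf
  have hApow : 2 * M * (M:ℝ)^α ≤ 2 * x ^ ((1+α)/2) := by
    have h1 : (M:ℝ)^α ≤ sx^α := Real.rpow_le_rpow hMpos.le hMle hα0
    have h2 : 2 * M * (M:ℝ)^α ≤ 2 * sx * sx^α := by
      apply mul_le_mul (by linarith) h1 (Real.rpow_nonneg hMpos.le _) (by linarith)
    have h3 : sx * sx^α = sx^(1+α) := by
      rw [Real.rpow_add hsxpos, Real.rpow_one]
    have h4 : sx^(1+α) = x^((1+α)/2) := hxhalf _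
    nlinarith [Real.rpow_nonneg hsxpos.le (1+α)]
  have hBpow : x ^ α * ((K:ℝ) ^ (1-α) / (1-α)) ≤ x ^ ((1+α)/2) / (1-α) := by
    have h1 : (K:ℝ) ^ (1-α) ≤ sx ^ (1-α) :=
      Real.rpow_le_rpow (Nat.cast_nonneg K) hKle (by linarith)
    have h2 : sx ^ (1-α) = x ^ ((1-α)/2) := hxhalf _
    have h3 : x ^ α * x ^ ((1-α)/2) = x ^ ((1+α)/2) := by
      rw [← Real.rpow_add hx0]; ring_nf
    calc x ^ α * ((K:ℝ) ^ (1-α) / (1-α)) ≤ x ^ α * (x ^ ((1-α)/2) / (1-α)) := by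
          apply mul_le_mul_of_nonneg_left _ (Real.rpow_nonneg hx0.le _)
          apply div_le_div_of_nonneg_right _ (by linarith)
          rw [← h2]; exact h1
    _ = x ^ ((1+α)/2) / (1-α) := by rw [← h3]; ring
  have hCpow : x * (C₃ * (M:ℝ) ^ ((α-1)/2)) ≤
      C₃ * (2:ℝ) ^ ((1-α)/2) * x ^ (1 - (1-α)/4) := by
    have h1 : (M:ℝ) ^ ((α-1)/2) ≤ (sx/2) ^ ((α-1)/2) :=
      Real.rpow_le_rpow_of_nonpos (by linarith) hMhalf (by linarith)
    have h2 : (sx/2) ^ ((α-1)/2) = sx ^ ((α-1)/2) / (2:ℝ) ^ ((α-1)/2) :=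
      Real.div_rpow hsxpos.le (by norm_num : (0:ℝ) ≤ 2) _
    have h3 : sx ^ ((α-1)/2) = x ^ ((α-1)/4) := by rw [hxhalf]; ring_nf
    have h4 : (1:ℝ) / (2:ℝ) ^ ((α-1)/2) = (2:ℝ) ^ ((1-α)/2) := by
      rw [show (1-α)/2 = -((α-1)/2) by ring, Real.rpow_neg (by norm_num : (0:ℝ) ≤ 2), one_div]
    have h5 : x * x ^ ((α-1)/4) = x ^ (1 - (1-α)/4) := by
      rw [show (1:ℝ) - (1-α)/4 = 1 + (α-1)/4 by ring, Real.rpow_add hx0, Real.rpow_one]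
    calc x * (C₃ * (M:ℝ) ^ ((α-1)/2)) ≤ x * (C₃ * (sx/2) ^ ((α-1)/2)) := by
          apply mul_le_mul_of_nonneg_left _ hx0.le
          exact mul_le_mul_of_nonneg_left h1 hC₃0
    _ = C₃ * (2:ℝ) ^ ((1-α)/2) * (x * x ^ ((α-1)/4)) := by
          rw [h2, h3, ← h4]; ring
    _ = C₃ * (2:ℝ) ^ ((1-α)/2) * x ^ (1 - (1-α)/4) := by rw [h5]
  have hmono : x ^ ((1+α)/2) ≤ x ^ (1 - (1-α)/4) :=
    Real.rpow_le_rpow_of_exponent_le hx1 (by linarith)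
  -- final assembly
  set S := ∑ n ∈ Finset.Icc 1 N, lam ^ (cardFactors ⌊x / (n : ℝ)⌋₊) with hS
  have hSig : (∑' n : ℕ, T n) = (∑ m ∈ Finset.Icc 1 M, g m) + tail := by
    rw [← hps, hreindex]
  have hdecomp : S - x * (∑' n : ℕ, T n) =
      (∑ n ∈ Finset.Icc 1 K, lam ^ (cardFactors ⌊x / (n : ℝ)⌋₊)) +
      ((∑ m ∈ Finset.Icc 1 M,
        ((⌊x / (m:ℝ)⌋₊ : ℝ) - (⌊x / ((m:ℝ)+1)⌋₊ : ℝ)) * lam ^ (cardFactors m)) -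
        x * ∑ m ∈ Finset.Icc 1 M, g m) - x * tail := by
    have hmid' : (∑ n ∈ Finset.Ioc K N, lam ^ (cardFactors ⌊x / (n : ℝ)⌋₊)) =
        ∑ m ∈ Finset.Icc 1 M,
          ((⌊x / (m:ℝ)⌋₊ : ℝ) - (⌊x / ((m:ℝ)+1)⌋₊ : ℝ)) * lam ^ (cardFactors m) := hmid
    rw [hsplit, hSig, hmid']
    ring
  rw [hdecomp]
  have hxtail : |x * tail| ≤ C₃ * (2:ℝ) ^ ((1-α)/2) * x ^ (1 - (1-α)/4) := by
    rw [abs_of_nonneg (mul_nonneg hx0.le htail0)]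
    calc x * tail ≤ x * (C₃ * (M:ℝ) ^ ((α-1)/2)) :=
          mul_le_mul_of_nonneg_left htailbd hx0.le
    _ ≤ C₃ * (2:ℝ) ^ ((1-α)/2) * x ^ (1 - (1-α)/4) := hCpow
  have hheadabs : |∑ n ∈ Finset.Icc 1 K, lam ^ (cardFactors ⌊x / (n : ℝ)⌋₊)| ≤
      x ^ (1 - (1-α)/4) / (1-α) := by
    rw [abs_of_nonneg hhead0]
    calc (∑ n ∈ Finset.Icc 1 K, lam ^ (cardFactors ⌊x / (n : ℝ)⌋₊))
        ≤ x ^ α * ((K:ℝ) ^ (1-α) / (1-α)) := hheadbd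
    _ ≤ x ^ ((1+α)/2) / (1-α) := hBpow
    _ ≤ x ^ (1 - (1-α)/4) / (1-α) := by
        apply div_le_div_of_nonneg_right hmono (by linarith)
  have happroxabs : |(∑ m ∈ Finset.Icc 1 M,
      ((⌊x / (m:ℝ)⌋₊ : ℝ) - (⌊x / ((m:ℝ)+1)⌋₊ : ℝ)) * lam ^ (cardFactors m)) -
      x * ∑ m ∈ Finset.Icc 1 M, g m| ≤ 2 * x ^ (1 - (1-α)/4) := by
    calc |(∑ m ∈ Finset.Icc 1 M,
        ((⌊x / (m:ℝ)⌋₊ : ℝ) - (⌊x / ((m:ℝ)+1)⌋₊ : ℝ)) * lam ^ (cardFactors m)) -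
        x * ∑ m ∈ Finset.Icc 1 M, g m| ≤ 2 * M * (M:ℝ)^α := happrox
    _ ≤ 2 * x ^ ((1+α)/2) := hApow
    _ ≤ 2 * x ^ (1 - (1-α)/4) := by linarith
  calc |(∑ n ∈ Finset.Icc 1 K, lam ^ (cardFactors ⌊x / (n : ℝ)⌋₊)) +
      ((∑ m ∈ Finset.Icc 1 M,
        ((⌊x / (m:ℝ)⌋₊ : ℝ) - (⌊x / ((m:ℝ)+1)⌋₊ : ℝ)) * lam ^ (cardFactors m)) -
        x * ∑ m ∈ Finset.Icc 1 M, g m) - x * tail|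
      ≤ |∑ n ∈ Finset.Icc 1 K, lam ^ (cardFactors ⌊x / (n : ℝ)⌋₊)| +
        |(∑ m ∈ Finset.Icc 1 M,
          ((⌊x / (m:ℝ)⌋₊ : ℝ) - (⌊x / ((m:ℝ)+1)⌋₊ : ℝ)) * lam ^ (cardFactors m)) -
          x * ∑ m ∈ Finset.Icc 1 M, g m| + |x * tail| := by
        have h1 := abs_add_le ((∑ n ∈ Finset.Icc 1 K, lam ^ (cardFactors ⌊x / (n : ℝ)⌋₊)) +
          ((∑ m ∈ Finset.Icc 1 M,
            ((⌊x / (m:ℝ)⌋₊ : ℝ) - (⌊x / ((m:ℝ)+1)⌋₊ : ℝ)) * lam ^ (cardFactors m)) -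
            x * ∑ m ∈ Finset.Icc 1 M, g m)) (-(x * tail))
        have h2 := abs_add_le (∑ n ∈ Finset.Icc 1 K, lam ^ (cardFactors ⌊x / (n : ℝ)⌋₊))
          ((∑ m ∈ Finset.Icc 1 M,
            ((⌊x / (m:ℝ)⌋₊ : ℝ) - (⌊x / ((m:ℝ)+1)⌋₊ : ℝ)) * lam ^ (cardFactors m)) -
            x * ∑ m ∈ Finset.Icc 1 M, g m)
        rw [abs_neg] at h1
        rw [← sub_eq_add_neg] at h1
        linarith
  _ ≤ x ^ (1 - (1-α)/4) / (1-α) + 2 * x ^ (1 - (1-α)/4) +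
        C₃ * (2:ℝ) ^ ((1-α)/2) * x ^ (1 - (1-α)/4) := by
        linarith
  _ = (1/(1-α) + 2 + C₃ * (2:ℝ) ^ ((1-α)/2)) * x ^ (1 - (1-α)/4) := by ring
end

section
/- Let k ≥ 2 be an integer. For every ε > 0 one has ∑_{n ≤ x} M_k(n)² ≤ x^{2 + 1/k + ε} for all sufficiently large real x. -/
open Finset Real

/-- `Mk k n`: the maximal `k`-full divisor of `n`, i.e. the largest divisor `d` of `n`
such that `p^k ∣ d` for every prime `p ∣ d`. -/
def Mk (k n : ℕ) : ℕ :=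
  Finset.sup (n.divisors.filter (fun d => ∀ p ∈ d.primeFactors, p ^ k ∣ d)) id

lemma Mk_mem {k n : ℕ} (hn : n ≠ 0) :
    Mk k n ∈ n.divisors.filter (fun d => ∀ p ∈ d.primeFactors, p ^ k ∣ d) := by
  have hne : (n.divisors.filter (fun d => ∀ p ∈ d.primeFactors, p ^ k ∣ d)).Nonempty := by
    refine ⟨1, ?_⟩
    simp [Nat.mem_divisors, hn]
  obtain ⟨b, hb, h⟩ := Finset.exists_mem_eq_sup _ hne id
  rw [Mk, h]
  exact hb

/-- Decomposition of a `k`-full number `d` as `a^k * c` with `c ∣ a^(k-1)`. -/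
lemma kfull_decomp {k d : ℕ} (hk : 1 ≤ k) (hd : d ≠ 0)
    (hfull : ∀ p ∈ d.primeFactors, p ^ k ∣ d) :
    Nat.floorRoot k d ≠ 0 ∧ Nat.floorRoot k d ^ k ∣ d ∧
      d / Nat.floorRoot k d ^ k ∣ Nat.floorRoot k d ^ (k - 1) := by
  have hk0 : k ≠ 0 := by omega
  set a := Nat.floorRoot k d with ha
  have ha0 : a ≠ 0 := Nat.floorRoot_ne_zero.2 ⟨hk0, hd⟩
  have hdvd : a ^ k ∣ d := Nat.floorRoot_pow_dvd
  refine ⟨ha0, hdvd, ?_⟩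
  set c := d / a ^ k with hc
  have hak0 : a ^ k ≠ 0 := pow_ne_zero _ ha0
  have hc0 : c ≠ 0 := by
    rw [hc]
    intro h0
    have := Nat.div_mul_cancel hdvd
    rw [h0, zero_mul] at this
    exact hd this.symm
  have hak1 : a ^ (k - 1) ≠ 0 := pow_ne_zero _ ha0
  rw [← Nat.factorization_le_iff_dvd hc0 hak1]
  rw [Finsupp.le_def]
  intro p
  have hcf : c.factorization = d.factorization - (a ^ k).factorization :=
    Nat.factorization_div hdvd
  have haf : a.factorization p = d.factorization p / k := by
    rw [ha, Nat.factorization_floorRoot]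
    simp
  have h1 : c.factorization p = d.factorization p - k * (d.factorization p / k) := by
    rw [hcf, Finsupp.tsub_apply, Nat.factorization_pow, Finsupp.smul_apply, haf, smul_eq_mul]
  have h2 : (a ^ (k - 1)).factorization p = (k - 1) * (d.factorization p / k) := by
    rw [Nat.factorization_pow, Finsupp.smul_apply, haf, smul_eq_mul]
  rw [h1, h2]
  by_cases hp : p ∈ d.primeFactors
  · have hpp : p.Prime := Nat.prime_of_mem_primeFactors hp
    have hke : k ≤ d.factorization p := by
      rw [← hpp.pow_dvd_iff_le_factorization hd]
      exact hfull p hp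
    set e := d.factorization p with he
    have hq : 1 ≤ e / k := (Nat.one_le_div_iff (by omega)).2 hke
    have hmod : e % k + k * (e / k) = e := Nat.mod_add_div e k
    have hr : e % k < k := Nat.mod_lt _ (by omega)
    calc e - k * (e / k) = e % k := by omega
      _ ≤ k - 1 := by omega
      _ ≤ (k - 1) * (e / k) := Nat.le_mul_of_pos_right _ (by omega)
  · have : d.factorization p = 0 := by
      simpa using Finsupp.notMem_support_iff.1 (by simpa using hp)
    simp [this]

/-- Divisor bound: `τ(m) ≤ (1 + log₂ m)^B * m^δ` where `B ≥ 2^(1/δ)`. -/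
lemma card_divisors_le (δ : ℝ) (hδ : 0 < δ) {B : ℕ} (hB : (2 : ℝ) ^ (1 / δ) ≤ B)
    {m : ℕ} (hm : m ≠ 0) :
    ((m.divisors.card : ℝ)) ≤ (1 + Real.logb 2 m) ^ B * (m : ℝ) ^ δ := by
  have hm1 : (1 : ℝ) ≤ (m : ℝ) := by exact_mod_cast Nat.one_le_iff_ne_zero.2 hm
  have hm0 : (0 : ℝ) < (m : ℝ) := by linarith
  have hlog0 : 0 ≤ Real.logb 2 m := Real.logb_nonneg one_lt_two hm1
  rw [Nat.card_divisors hm]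
  push_cast
  classical
  rw [← Finset.prod_filter_mul_prod_filter_not m.primeFactors
    (fun p : ℕ => (p : ℝ) < (2 : ℝ) ^ (1 / δ))]
  have key1 : ∀ p ∈ m.primeFactors, ((m.factorization p : ℝ) + 1) ≤ 1 + Real.logb 2 m := by
    intro p hp
    have hpp : p.Prime := Nat.prime_of_mem_primeFactors hp
    have hdvd : p ^ m.factorization p ∣ m := Nat.ordProj_dvd m p
    have h2e : (2 : ℕ) ^ m.factorization p ≤ m :=
      le_trans (Nat.pow_le_pow_left hpp.two_le _) (Nat.le_of_dvd (Nat.pos_of_ne_zero hm) hdvd)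
    have : ((m.factorization p : ℝ)) ≤ Real.logb 2 m := by
      rw [Real.le_logb_iff_rpow_le one_lt_two hm0, Real.rpow_natCast]
      exact_mod_cast h2e
    linarith
  have h1 : (∏ p ∈ m.primeFactors.filter (fun p : ℕ => (p : ℝ) < (2 : ℝ) ^ (1 / δ)),
      ((m.factorization p : ℝ) + 1)) ≤ (1 + Real.logb 2 m) ^ B := by
    calc (∏ p ∈ m.primeFactors.filter (fun p : ℕ => (p : ℝ) < (2 : ℝ) ^ (1 / δ)),
        ((m.factorization p : ℝ) + 1))
        ≤ ∏ _p ∈ m.primeFactors.filter (fun p : ℕ => (p : ℝ) < (2 : ℝ) ^ (1 / δ)),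
          (1 + Real.logb 2 m) := by
          refine Finset.prod_le_prod (fun p _ => by positivity) ?_
          intro p hp
          exact key1 p (Finset.mem_filter.1 hp).1
      _ = (1 + Real.logb 2 m) ^
          (m.primeFactors.filter (fun p : ℕ => (p : ℝ) < (2 : ℝ) ^ (1 / δ))).card := by
          rw [Finset.prod_const]
      _ ≤ (1 + Real.logb 2 m) ^ B := by
          refine pow_le_pow_right₀ (by linarith) ?_
          have hsub : m.primeFactors.filter (fun p : ℕ => (p : ℝ) < (2 : ℝ) ^ (1 / δ))
              ⊆ Finset.Icc 1 B := by
            intro p hp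
            obtain ⟨hp1, hp2⟩ := Finset.mem_filter.1 hp
            have hpp : p.Prime := Nat.prime_of_mem_primeFactors hp1
            have : (p : ℝ) ≤ (B : ℝ) := le_trans hp2.le hB
            exact Finset.mem_Icc.2 ⟨hpp.one_lt.le, by exact_mod_cast this⟩
          calc _ ≤ (Finset.Icc 1 B).card := Finset.card_le_card hsub
            _ = B := by rw [Nat.card_Icc]; omega
  have h2 : (∏ p ∈ m.primeFactors.filter (fun p : ℕ => ¬ (p : ℝ) < (2 : ℝ) ^ (1 / δ)),
      ((m.factorization p : ℝ) + 1)) ≤ (m : ℝ) ^ δ := by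
    have heach : ∀ p ∈ m.primeFactors.filter (fun p : ℕ => ¬ (p : ℝ) < (2 : ℝ) ^ (1 / δ)),
        ((m.factorization p : ℝ) + 1) ≤ ((p : ℝ) ^ m.factorization p) ^ δ := by
      intro p hp
      obtain ⟨hp1, hp2⟩ := Finset.mem_filter.1 hp
      have hpp : p.Prime := Nat.prime_of_mem_primeFactors hp1
      have hp0 : (0 : ℝ) ≤ (p : ℝ) := by positivity
      have h2p : (2 : ℝ) ≤ (p : ℝ) ^ δ := by
        have := Real.rpow_le_rpow (by positivity) (not_lt.1 hp2) hδ.le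
        rwa [← Real.rpow_mul (by norm_num), one_div_mul_cancel hδ.ne', Real.rpow_one] at this
      set e := m.factorization p
      calc ((e : ℝ) + 1) ≤ (2 : ℝ) ^ e := by exact_mod_cast (Nat.lt_two_pow_self (n := e))
        _ ≤ ((p : ℝ) ^ δ) ^ e := pow_le_pow_left₀ (by norm_num) h2p e
        _ = ((p : ℝ) ^ e) ^ δ := by
            rw [← Real.rpow_natCast ((p : ℝ) ^ δ) e, ← Real.rpow_natCast (p : ℝ) e,
              ← Real.rpow_mul hp0, ← Real.rpow_mul hp0, mul_comm]
    calc (∏ p ∈ m.primeFactors.filter (fun p : ℕ => ¬ (p : ℝ) < (2 : ℝ) ^ (1 / δ)),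
        ((m.factorization p : ℝ) + 1))
        ≤ ∏ p ∈ m.primeFactors.filter (fun p : ℕ => ¬ (p : ℝ) < (2 : ℝ) ^ (1 / δ)),
          ((p : ℝ) ^ m.factorization p) ^ δ :=
          Finset.prod_le_prod (fun p _ => by positivity) heach
      _ = (∏ p ∈ m.primeFactors.filter (fun p : ℕ => ¬ (p : ℝ) < (2 : ℝ) ^ (1 / δ)),
          ((p : ℝ) ^ m.factorization p)) ^ δ :=
          Real.finset_prod_rpow _ _ (fun p _ => by positivity) δ
      _ ≤ (m : ℝ) ^ δ := by
          refine Real.rpow_le_rpow (Finset.prod_nonneg fun p _ => by positivity) ?_ hδ.le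
          have hdvd : (∏ p ∈ m.primeFactors.filter (fun p : ℕ => ¬ (p : ℝ) < (2 : ℝ) ^ (1 / δ)),
              p ^ m.factorization p) ∣ m := by
            have hsub := Finset.filter_subset
              (fun p : ℕ => ¬ (p : ℝ) < (2 : ℝ) ^ (1 / δ)) m.primeFactors
            calc (∏ p ∈ m.primeFactors.filter (fun p : ℕ => ¬ (p : ℝ) < (2 : ℝ) ^ (1 / δ)),
                p ^ m.factorization p)
                ∣ ∏ p ∈ m.primeFactors, p ^ m.factorization p :=
                Finset.prod_dvd_prod_of_subset _ _ (fun p => p ^ m.factorization p) hsub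
              _ = m := Nat.factorization_prod_pow_eq_self hm
          have := Nat.le_of_dvd (Nat.pos_of_ne_zero hm) hdvd
          exact_mod_cast this
  calc _ ≤ (1 + Real.logb 2 m) ^ B *
        (∏ p ∈ m.primeFactors.filter (fun p : ℕ => ¬ (p : ℝ) < (2 : ℝ) ^ (1 / δ)),
          ((m.factorization p : ℝ) + 1)) := by
        refine mul_le_mul_of_nonneg_right h1 ?_
        exact Finset.prod_nonneg fun p _ => by positivity
    _ ≤ (1 + Real.logb 2 m) ^ B * (m : ℝ) ^ δ := by
        exact mul_le_mul_of_nonneg_left h2 (by positivity)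

lemma eventually_one_add_logb_le {r : ℝ} (hr : 0 < r) :
    ∀ᶠ x : ℝ in Filter.atTop, 1 + Real.logb 2 x ≤ x ^ r := by
  have h1 := (isLittleO_log_rpow_atTop hr).def (c := Real.log 2 / 2) (by positivity)
  have h2 := (tendsto_rpow_atTop hr).eventually_ge_atTop 2
  filter_upwards [h1, h2, Filter.eventually_ge_atTop (1 : ℝ)] with x hx hx2 hx1
  have hlog2 : (0 : ℝ) < Real.log 2 := Real.log_pos one_lt_two
  have hxr : (0 : ℝ) ≤ x ^ r := Real.rpow_nonneg (by linarith) r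
  rw [Real.norm_eq_abs, Real.norm_eq_abs, abs_of_nonneg (Real.log_nonneg hx1),
    abs_of_nonneg hxr] at hx
  have hlb : Real.logb 2 x ≤ x ^ r / 2 := by
    rw [Real.logb, div_le_div_iff₀ hlog2 (by norm_num)]
    nlinarith
  linarith

/-- For `k ≥ 2` and every `ε > 0`, `∑_{n ≤ x} M_k(n)² ≤ x^{2+1/k+ε}` for all
sufficiently large real `x`. -/
theorem sum_Mk_sq_bound (k : ℕ) (hk : 2 ≤ k) (ε : ℝ) (hε : 0 < ε) :
    ∃ x₀ : ℝ, ∀ x : ℝ, x₀ ≤ x →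
      (∑ n ∈ Finset.Icc 1 ⌊x⌋₊, (Mk k n : ℝ) ^ 2) ≤ x ^ ((2 : ℝ) + 1 / k + ε) := by
  classical
  have hk0 : k ≠ 0 := by omega
  set δ : ℝ := ε / 2 with hδdef
  have hδ : 0 < δ := by positivity
  set B : ℕ := ⌈(2 : ℝ) ^ (1 / δ)⌉₊ with hBdef
  have hB : (2 : ℝ) ^ (1 / δ) ≤ B := Nat.le_ceil _
  have hBpos : 0 < B := by
    rw [hBdef]
    exact Nat.ceil_pos.2 (Real.rpow_pos_of_pos (by norm_num) _)
  set s : ℝ := ε / (2 * B) with hsdef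
  have hs : 0 < s := by positivity
  have hev : ∀ᶠ x : ℝ in Filter.atTop, (1 + Real.logb 2 x) ^ B ≤ x ^ (ε / 2) := by
    filter_upwards [eventually_one_add_logb_le hs, Filter.eventually_ge_atTop (1 : ℝ)]
      with x h hx1
    have hlog0 : 0 ≤ Real.logb 2 x := Real.logb_nonneg one_lt_two hx1
    calc (1 + Real.logb 2 x) ^ B ≤ (x ^ s) ^ B := pow_le_pow_left₀ (by linarith) h B
      _ = x ^ (s * B) := by
          rw [← Real.rpow_natCast (x ^ s) B, ← Real.rpow_mul (by linarith)]
      _ ≤ x ^ (ε / 2) := by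
          apply le_of_eq
          congr 1
          rw [hsdef]
          have hBne : (B : ℝ) ≠ 0 := by exact_mod_cast hBpos.ne'
          field_simp
  rw [Filter.eventually_atTop] at hev
  obtain ⟨x₁, hx₁⟩ := hev
  refine ⟨max x₁ 2, fun x hx => ?_⟩
  have hx2 : (2 : ℝ) ≤ x := le_trans (le_max_right _ _) hx
  have hx1 : (1 : ℝ) ≤ x := by linarith
  have hx0 : (0 : ℝ) < x := by linarith
  have hLog : (1 + Real.logb 2 x) ^ B ≤ x ^ (ε / 2) := hx₁ x (le_trans (le_max_left _ _) hx)
  set N : ℕ := ⌊x⌋₊ with hNdef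
  have hN1 : 1 ≤ N := Nat.le_floor (by exact_mod_cast hx1)
  have hN0 : N ≠ 0 := by omega
  have hNx : (N : ℝ) ≤ x := Nat.floor_le (by linarith)
  have hNR1 : (1 : ℝ) ≤ (N : ℝ) := by exact_mod_cast hN1
  set K : Finset ℕ := (Finset.Icc 1 N).filter (fun d => ∀ p ∈ d.primeFactors, p ^ k ∣ d)
    with hKdef
  set S : Finset ℕ := (Finset.Icc 1 N).filter (fun a => a ^ k ≤ N) with hSdef
  -- Step 1 : ∑ Mk² ≤ K.card * N², in ℕ
  have step1 : (∑ n ∈ Finset.Icc 1 N, (Mk k n) ^ 2) ≤ K.card * N ^ 2 := by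
    have hmap : ∀ n ∈ Finset.Icc 1 N, Mk k n ∈ K := by
      intro n hn
      obtain ⟨hn1, hn2⟩ := Finset.mem_Icc.1 hn
      have hn0 : n ≠ 0 := by omega
      have hmem := Mk_mem (k := k) hn0
      obtain ⟨hdiv, hfull⟩ := Finset.mem_filter.1 hmem
      obtain ⟨hdvd, -⟩ := Nat.mem_divisors.1 hdiv
      have hMk0 : Mk k n ≠ 0 := by
        rintro h0
        rw [h0] at hdvd
        exact hn0 (Nat.eq_zero_of_zero_dvd hdvd)
      have hMkN : Mk k n ≤ N := le_trans (Nat.le_of_dvd (by omega) hdvd) hn2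
      exact Finset.mem_filter.2 ⟨Finset.mem_Icc.2 ⟨by omega, hMkN⟩, hfull⟩
    rw [← Finset.sum_fiberwise_of_maps_to hmap (fun n => (Mk k n) ^ 2)]
    calc (∑ d ∈ K, ∑ n ∈ (Finset.Icc 1 N).filter (fun n => Mk k n = d), (Mk k n) ^ 2)
        ≤ ∑ _d ∈ K, N ^ 2 := by
          refine Finset.sum_le_sum ?_
          intro d hd
          obtain ⟨hdIcc, -⟩ := Finset.mem_filter.1 hd
          obtain ⟨hd1, hdN⟩ := Finset.mem_Icc.1 hdIcc
          have hfib : ∑ n ∈ (Finset.Icc 1 N).filter (fun n => Mk k n = d), (Mk k n) ^ 2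
              = ((Finset.Icc 1 N).filter (fun n => Mk k n = d)).card * d ^ 2 := by
            rw [Finset.sum_congr rfl (fun n hn => by
              rw [(Finset.mem_filter.1 hn).2]), Finset.sum_const, smul_eq_mul]
          rw [hfib]
          have hsub : (Finset.Icc 1 N).filter (fun n => Mk k n = d)
              ⊆ (Finset.Ioc 0 N).filter (fun n => d ∣ n) := by
            intro n hn
            obtain ⟨hnIcc, hnMk⟩ := Finset.mem_filter.1 hn
            obtain ⟨hn1, hn2⟩ := Finset.mem_Icc.1 hnIcc
            have hn0 : n ≠ 0 := by omega
            have hmem := Mk_mem (k := k) hn0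
            obtain ⟨hdiv, -⟩ := Finset.mem_filter.1 hmem
            obtain ⟨hdvd, -⟩ := Nat.mem_divisors.1 hdiv
            rw [hnMk] at hdvd
            exact Finset.mem_filter.2 ⟨Finset.mem_Ioc.2 ⟨by omega, hn2⟩, hdvd⟩
          have hcard : ((Finset.Icc 1 N).filter (fun n => Mk k n = d)).card ≤ N / d := by
            calc _ ≤ ((Finset.Ioc 0 N).filter (fun n => d ∣ n)).card :=
                  Finset.card_le_card hsub
              _ = N / d := Nat.Ioc_filter_dvd_card_eq_div N d
          calc ((Finset.Icc 1 N).filter (fun n => Mk k n = d)).card * d ^ 2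
              ≤ (N / d) * d ^ 2 := Nat.mul_le_mul_right _ hcard
            _ = ((N / d) * d) * d := by ring
            _ ≤ N * d := Nat.mul_le_mul_right _ (Nat.div_mul_le_self N d)
            _ ≤ N * N := Nat.mul_le_mul_left _ hdN
            _ = N ^ 2 := by ring
      _ = K.card * N ^ 2 := by rw [Finset.sum_const, smul_eq_mul]
  -- Step 2 : K.card ≤ ∑_{a ∈ S} τ(a^(k-1)), in ℕ
  have step2 : K.card ≤ ∑ a ∈ S, (a ^ (k - 1)).divisors.card := by
    rw [← Finset.card_sigma]
    apply Finset.card_le_card_of_injOn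
      (fun d => (⟨Nat.floorRoot k d, d / Nat.floorRoot k d ^ k⟩ : Σ _ : ℕ, ℕ))
    · intro d hd
      obtain ⟨hdIcc, hfull⟩ := Finset.mem_filter.1 hd
      obtain ⟨hd1, hdN⟩ := Finset.mem_Icc.1 hdIcc
      have hd0 : d ≠ 0 := by omega
      obtain ⟨ha0, hdvd, hcdvd⟩ := kfull_decomp (by omega) hd0 hfull
      have hakd : Nat.floorRoot k d ^ k ≤ d := Nat.le_of_dvd (by omega) hdvd
      have haS : Nat.floorRoot k d ∈ S := by
        refine Finset.mem_filter.2 ⟨Finset.mem_Icc.2 ⟨by omega, ?_⟩, by omega⟩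
        calc Nat.floorRoot k d ≤ Nat.floorRoot k d ^ k := Nat.le_self_pow hk0 _
          _ ≤ N := by omega
      exact Finset.mem_sigma.2 ⟨haS, Nat.mem_divisors.2 ⟨hcdvd, pow_ne_zero _ ha0⟩⟩
    · intro d hd d' hd' heq
      have h1 : Nat.floorRoot k d = Nat.floorRoot k d' := congrArg Sigma.fst heq
      have h2 : d / Nat.floorRoot k d ^ k = d' / Nat.floorRoot k d' ^ k :=
        congrArg (fun p : (Σ _ : ℕ, ℕ) => p.2) heq
      have hd'' := Finset.mem_coe.1 hd
      have hd''' := Finset.mem_coe.1 hd'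
      obtain ⟨hdIcc, hfull⟩ := Finset.mem_filter.1 hd''
      obtain ⟨hdIcc', hfull'⟩ := Finset.mem_filter.1 hd'''
      obtain ⟨hdp1, -⟩ := Finset.mem_Icc.1 hdIcc
      obtain ⟨hdp1', -⟩ := Finset.mem_Icc.1 hdIcc'
      obtain ⟨-, hdvd, -⟩ := kfull_decomp (by omega) (by omega) hfull
      obtain ⟨-, hdvd', -⟩ := kfull_decomp (by omega) (by omega) hfull'
      have e1 : Nat.floorRoot k d ^ k * (d / Nat.floorRoot k d ^ k) = d :=
        Nat.mul_div_cancel' hdvd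
      have e1' : Nat.floorRoot k d' ^ k * (d' / Nat.floorRoot k d' ^ k) = d' :=
        Nat.mul_div_cancel' hdvd'
      rw [← e1, ← e1', h2, h1]
  -- Step 3 : bound each τ(a^(k-1)) in ℝ
  have step3 : ∀ a ∈ S, ((a ^ (k - 1)).divisors.card : ℝ) ≤ x ^ ε := by
    intro a haS
    obtain ⟨haIcc, hakN⟩ := Finset.mem_filter.1 haS
    obtain ⟨ha1, haN⟩ := Finset.mem_Icc.1 haIcc
    have ha0 : a ≠ 0 := by omega
    have hm0 : a ^ (k - 1) ≠ 0 := pow_ne_zero _ ha0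
    have hmN : a ^ (k - 1) ≤ N := by
      calc a ^ (k - 1) ≤ a ^ k := Nat.pow_le_pow_right (by omega) (by omega)
        _ ≤ N := hakN
    have hmx : ((a ^ (k - 1) : ℕ) : ℝ) ≤ x := le_trans (by exact_mod_cast hmN) hNx
    have hm1 : (1 : ℝ) ≤ ((a ^ (k - 1) : ℕ) : ℝ) := by
      exact_mod_cast Nat.one_le_iff_ne_zero.2 hm0
    have hbound := card_divisors_le δ hδ hB hm0
    have hlogle : 1 + Real.logb 2 ((a ^ (k - 1) : ℕ) : ℝ) ≤ 1 + Real.logb 2 x := by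
      have := Real.logb_le_logb_of_le one_lt_two (by linarith) hmx
      linarith
    have hlog0 : 0 ≤ Real.logb 2 ((a ^ (k - 1) : ℕ) : ℝ) :=
      Real.logb_nonneg one_lt_two hm1
    calc ((a ^ (k - 1)).divisors.card : ℝ)
        ≤ (1 + Real.logb 2 ((a ^ (k - 1) : ℕ) : ℝ)) ^ B * ((a ^ (k - 1) : ℕ) : ℝ) ^ δ :=
          hbound
      _ ≤ (1 + Real.logb 2 x) ^ B * x ^ δ := by
          have hlx : 0 ≤ Real.logb 2 x := Real.logb_nonneg one_lt_two hx1
          refine mul_le_mul (pow_le_pow_left₀ (by linarith) hlogle B)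
            (Real.rpow_le_rpow (by linarith) hmx hδ.le) (by positivity)
            (pow_nonneg (by linarith) B)
      _ ≤ x ^ (ε / 2) * x ^ (ε / 2) := by
          refine mul_le_mul_of_nonneg_right hLog (by positivity)
      _ = x ^ ε := by
          rw [← Real.rpow_add hx0]; norm_num
  -- Step 4 : S.card ≤ x^(1/k)
  have step4 : (S.card : ℝ) ≤ x ^ (1 / (k : ℝ)) := by
    set A : ℕ := ⌊x ^ (1 / (k : ℝ))⌋₊ with hAdef
    have hsub : S ⊆ Finset.Icc 1 A := by
      intro a haS
      obtain ⟨haIcc, hakN⟩ := Finset.mem_filter.1 haS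
      obtain ⟨ha1, haN⟩ := Finset.mem_Icc.1 haIcc
      have hax : ((a : ℝ)) ^ (k : ℕ) ≤ x := by
        calc ((a : ℝ)) ^ (k : ℕ) = ((a ^ k : ℕ) : ℝ) := by push_cast; ring
          _ ≤ (N : ℝ) := by exact_mod_cast hakN
          _ ≤ x := hNx
      have haR : (a : ℝ) ≤ x ^ (1 / (k : ℝ)) := by
        have hkR : ((k : ℝ)) ≠ 0 := by exact_mod_cast hk0
        have h1 : (a : ℝ) = (((a : ℝ)) ^ (k : ℕ)) ^ (1 / (k : ℝ)) := by
          rw [← Real.rpow_natCast (a : ℝ) k, ← Real.rpow_mul (by positivity),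
            mul_one_div_cancel hkR, Real.rpow_one]
        rw [h1]
        exact Real.rpow_le_rpow (by positivity) hax (by positivity)
      exact Finset.mem_Icc.2 ⟨ha1, Nat.le_floor haR⟩
    calc (S.card : ℝ) ≤ ((Finset.Icc 1 A).card : ℝ) := by
          exact_mod_cast Finset.card_le_card hsub
      _ ≤ (A : ℝ) := by
          rw [Nat.card_Icc]
          have : A + 1 - 1 = A := by omega
          rw [this]
      _ ≤ x ^ (1 / (k : ℝ)) := Nat.floor_le (by positivity)
  -- Assemble
  have hsumR : (∑ n ∈ Finset.Icc 1 N, (Mk k n : ℝ) ^ 2)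
      ≤ (K.card : ℝ) * (N : ℝ) ^ 2 := by
    calc (∑ n ∈ Finset.Icc 1 N, (Mk k n : ℝ) ^ 2)
        = ((∑ n ∈ Finset.Icc 1 N, (Mk k n) ^ 2 : ℕ) : ℝ) := by push_cast; ring
      _ ≤ ((K.card * N ^ 2 : ℕ) : ℝ) := by exact_mod_cast step1
      _ = (K.card : ℝ) * (N : ℝ) ^ 2 := by push_cast; ring
  have hKR : (K.card : ℝ) ≤ (S.card : ℝ) * x ^ ε := by
    calc (K.card : ℝ) ≤ ((∑ a ∈ S, (a ^ (k - 1)).divisors.card : ℕ) : ℝ) := by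
          exact_mod_cast step2
      _ = ∑ a ∈ S, ((a ^ (k - 1)).divisors.card : ℝ) := by push_cast; ring
      _ ≤ ∑ _a ∈ S, x ^ ε := Finset.sum_le_sum step3
      _ = (S.card : ℝ) * x ^ ε := by rw [Finset.sum_const, nsmul_eq_mul]
  calc (∑ n ∈ Finset.Icc 1 N, (Mk k n : ℝ) ^ 2)
      ≤ (K.card : ℝ) * (N : ℝ) ^ 2 := hsumR
    _ ≤ ((S.card : ℝ) * x ^ ε) * x ^ (2 : ℕ) := by
        refine mul_le_mul hKR (pow_le_pow_left₀ (by positivity) hNx 2) (by positivity)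
          (by positivity)
    _ ≤ ((x ^ (1 / (k : ℝ)) * x ^ ε)) * x ^ (2 : ℕ) := by
        refine mul_le_mul_of_nonneg_right ?_ (by positivity)
        exact mul_le_mul_of_nonneg_right step4 (by positivity)
    _ = x ^ ((2 : ℝ) + 1 / k + ε) := by
        rw [Real.rpow_add hx0, Real.rpow_add hx0, ← Real.rpow_natCast x 2]
        push_cast
        ring
end

section
/- For every real x ≥ 1 one has ∑_{n ≤ x} φ(⌊x/n⌋) = ∑_{n ≤ x} τ_x(n), where for a positive integer n ≤ x, τ_x(n) denotes the number of divisors d of n such that gcd(d, ⌊d·x/n⌋) = 1. -/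
open Finset Real

/-- For every real `x ≥ 1`, `∑_{n ≤ x} φ(⌊x/n⌋) = ∑_{n ≤ x} τ_x(n)`, where `τ_x(n)` is
the number of divisors `d` of `n` such that `gcd(d, ⌊d·x/n⌋) = 1`. -/
theorem sum_totient_floor_div_eq_sum_taux (x : ℝ) (hx : 1 ≤ x) :
    (∑ n ∈ Finset.Icc 1 ⌊x⌋₊, Nat.totient ⌊x / (n : ℝ)⌋₊) =
      ∑ n ∈ Finset.Icc 1 ⌊x⌋₊,
        (n.divisors.filter (fun d => Nat.gcd d ⌊(d : ℝ) * x / (n : ℝ)⌋₊ = 1)).card := by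
  have hx0 : (0:ℝ) < x := lt_of_lt_of_le one_pos hx
  set X := ⌊x⌋₊ with hX
  have htot : ∀ N : ℕ, Nat.totient N
      = ((Finset.Icc 1 N).filter (fun d => Nat.gcd d N = 1)).card := by
    intro N
    rw [← Nat.filter_coprime_Ico_eq_totient N 1]
    congr 1
    rw [show 1 + N = N + 1 by ring, ← Finset.Ico_add_one_right_eq_Icc]
    ext d
    simp [Nat.Coprime, Nat.gcd_comm]
  calc (∑ n ∈ Finset.Icc 1 X, Nat.totient ⌊x / (n : ℝ)⌋₊)
      = ∑ m ∈ Finset.Icc 1 X,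
          ((Finset.Icc 1 ⌊x / (m : ℝ)⌋₊).filter
            (fun d => Nat.gcd d ⌊x / (m : ℝ)⌋₊ = 1)).card :=
        Finset.sum_congr rfl fun m _ => htot _
    _ = ((Finset.Icc 1 X).sigma fun m => (Finset.Icc 1 ⌊x / (m : ℝ)⌋₊).filter
            (fun d => Nat.gcd d ⌊x / (m : ℝ)⌋₊ = 1)).card := by
        rw [Finset.card_sigma]
    _ = ((Finset.Icc 1 X).sigma fun n =>
          n.divisors.filter (fun d => Nat.gcd d ⌊(d : ℝ) * x / (n : ℝ)⌋₊ = 1)).card := by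
        refine Finset.card_bij' (fun p _ => ⟨p.2 * p.1, p.2⟩)
          (fun p _ => ⟨p.1 / p.2, p.2⟩) ?_ ?_ ?_ ?_
        · rintro ⟨m, d⟩ hp
          simp only [Finset.mem_sigma, Finset.mem_filter, Finset.mem_Icc] at hp
          obtain ⟨⟨hm1, hmX⟩, ⟨hd1, hdle⟩, hgcd⟩ := hp
          have hm0 : (0:ℝ) < m := by exact_mod_cast hm1
          have hdx : (d:ℝ) ≤ x / m :=
            le_trans (Nat.cast_le.mpr hdle) (Nat.floor_le (by positivity))
          have hdm : (d:ℝ) * m ≤ x := (le_div_iff₀ hm0).mp hdx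
          simp only [Finset.mem_sigma, Finset.mem_filter, Finset.mem_Icc, Nat.mem_divisors]
          have heq : ((d:ℝ) * x / ((d * m : ℕ) : ℝ)) = x / m := by
            push_cast
            exact mul_div_mul_left x (m:ℝ) (Nat.cast_pos.mpr hd1).ne'
          refine ⟨⟨Nat.one_le_iff_ne_zero.mpr (by positivity), ?_⟩, ⟨⟨m, rfl⟩, by positivity⟩, ?_⟩
          · exact Nat.le_floor (by push_cast; exact hdm)
          · rw [heq]; exact hgcd
        · rintro ⟨n, d⟩ hp
          simp only [Finset.mem_sigma, Finset.mem_filter, Finset.mem_Icc,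
            Nat.mem_divisors] at hp
          obtain ⟨⟨hn1, hnX⟩, ⟨hdvd, hn0⟩, hgcd⟩ := hp
          obtain ⟨m, rfl⟩ := hdvd
          have hd0 : 0 < d := Nat.pos_of_ne_zero (by rintro rfl; simp at hn0)
          have hm0 : 0 < m := Nat.pos_of_ne_zero (by rintro rfl; simp at hn0)
          have hnx : ((d * m : ℕ) : ℝ) ≤ x :=
            le_trans (Nat.cast_le.mpr hnX) (Nat.floor_le hx0.le)
          have heq : ((d:ℝ) * x / ((d * m : ℕ) : ℝ)) = x / m := by
            push_cast
            exact mul_div_mul_left x (m:ℝ) (by exact_mod_cast hd0.ne')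
          simp only [Finset.mem_sigma, Finset.mem_filter, Finset.mem_Icc,
            Nat.mul_div_cancel_left m hd0]
          refine ⟨⟨hm0, le_trans (Nat.le_mul_of_pos_left m hd0) hnX⟩, ⟨hd0, ?_⟩, ?_⟩
          · apply Nat.le_floor
            rw [le_div_iff₀ (by exact_mod_cast hm0)]
            push_cast at hnx ⊢
            linarith
          · rw [← heq]; exact hgcd
        · rintro ⟨m, d⟩ hp
          simp only [Finset.mem_sigma, Finset.mem_filter, Finset.mem_Icc] at hp
          have hd0 : 0 < d := hp.2.1.1
          simp [Nat.mul_div_cancel_left m hd0]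
        · rintro ⟨n, d⟩ hp
          simp only [Finset.mem_sigma, Finset.mem_filter, Nat.mem_divisors] at hp
          simp [Nat.mul_div_cancel' hp.2.1.1]
    _ = ∑ n ∈ Finset.Icc 1 X,
          (n.divisors.filter (fun d => Nat.gcd d ⌊(d : ℝ) * x / (n : ℝ)⌋₊ = 1)).card := by
        rw [Finset.card_sigma]
end

section
/- Explicit upper bound: for every real x ≥ 3, S(x) ≤ (1/2)·(1 + 1/ζ(2))·x·log x + 4x + (√x·log x)/4 + √x. -/
open Finset Real

lemma tail_bound_s14 (k : ℕ) (hk : 1 ≤ k) : ∀ K, k ≤ K →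
    ∑ j ∈ Ioc k K, (1:ℝ)/(j:ℝ)^2 ≤ 1/k - 1/K := by
  intro K hK
  induction K, hK using Nat.le_induction with
  | base => simp
  | succ K hK ih =>
    rw [Finset.sum_Ioc_succ_top hK]
    have hK0 : (1:ℝ) ≤ K := by exact_mod_cast hk.trans hK
    have h1 : (1:ℝ)/((K:ℝ)+1)^2 ≤ 1/K - 1/(K+1) := by
      rw [div_sub_div _ _ (by linarith) (by linarith)]
      rw [div_le_div_iff₀ (by positivity) (by positivity)]
      ring_nf
      nlinarith
    push_cast
    linarith

lemma basel_lower (k : ℕ) (hk : 1 ≤ k) :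
    π^2/6 - 1/k ≤ ∑ j ∈ Ioc 0 k, (1:ℝ)/(j:ℝ)^2 := by
  have h : π^2/6 ≤ (∑ j ∈ Ioc 0 k, (1:ℝ)/(j:ℝ)^2) + 1/k := by
    rw [← hasSum_zeta_two.tsum_eq]
    apply Summable.tsum_le_of_sum_range_le hasSum_zeta_two.summable
    intro n
    have hsub : Finset.range n ⊆ insert 0 (Ioc 0 (max k n)) := by
      intro i hi
      simp only [Finset.mem_range] at hi
      simp only [Finset.mem_insert, Finset.mem_Ioc]
      omega
    calc ∑ i ∈ Finset.range n, (1:ℝ)/(i:ℝ)^2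
        ≤ ∑ i ∈ insert 0 (Ioc 0 (max k n)), (1:ℝ)/(i:ℝ)^2 :=
          Finset.sum_le_sum_of_subset_of_nonneg hsub (by intros; positivity)
      _ = ∑ i ∈ Ioc 0 (max k n), (1:ℝ)/(i:ℝ)^2 := by
          rw [Finset.sum_insert (by simp)]; norm_num
      _ ≤ (∑ j ∈ Ioc 0 k, (1:ℝ)/(j:ℝ)^2) + 1/k := by
          rw [← Finset.sum_Ioc_consecutive _ (Nat.zero_le k) (le_max_left k n)]
          have := tail_bound_s14 k hk (max k n) (le_max_left k n)
          have hK : (0:ℝ) ≤ 1/(max k n : ℕ) := by positivity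
          linarith
  linarith

lemma swap_div (m : ℕ) (f : ℕ → ℕ → ℝ) :
    ∑ k ∈ Ioc 0 m, ∑ p ∈ k.divisorsAntidiagonal, f p.1 p.2
      = ∑ q ∈ Ioc 0 m, ∑ e ∈ Ioc 0 (m / q), f q e := by
  rw [Finset.sum_sigma', Finset.sum_sigma']
  apply Finset.sum_nbij' (fun x => ⟨x.2.1, x.2.2⟩) (fun x => ⟨x.1 * x.2, x.1, x.2⟩)
  · rintro ⟨k, q, e⟩ h
    simp only [Finset.mem_sigma, Finset.mem_Ioc, Nat.mem_divisorsAntidiagonal] at h ⊢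
    obtain ⟨⟨hk0, hkm⟩, hqe, hk⟩ := h
    have hq : 0 < q := by
      rcases Nat.eq_zero_or_pos q with h | h
      · subst h; simp at hqe; omega
      · exact h
    have he : 0 < e := by
      rcases Nat.eq_zero_or_pos e with h | h
      · subst h; simp at hqe; omega
      · exact h
    refine ⟨⟨hq, ?_⟩, he, ?_⟩
    · calc q ≤ q * e := Nat.le_mul_of_pos_right q he
        _ ≤ m := by omega
    · rw [Nat.le_div_iff_mul_le hq, Nat.mul_comm]; omega
  · rintro ⟨q, e⟩ h
    simp only [Finset.mem_sigma, Finset.mem_Ioc, Nat.mem_divisorsAntidiagonal] at h ⊢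
    obtain ⟨⟨hq, hqm⟩, he, hem⟩ := h
    rw [Nat.le_div_iff_mul_le hq] at hem
    have h1 : 0 < q * e := by positivity
    exact ⟨⟨h1, by rw [Nat.mul_comm]; exact hem⟩, trivial, h1.ne'⟩
  · rintro ⟨k, q, e⟩ h
    simp only [Finset.mem_sigma, Nat.mem_divisorsAntidiagonal] at h
    obtain ⟨_, hqe, _⟩ := h
    simp [hqe]
  · rintro ⟨q, e⟩ h; rfl
  · rintro ⟨k, q, e⟩ h; rfl

lemma key_id (m : ℕ) :
    ∑ k ∈ Ioc 0 m, (1:ℝ)/(k:ℝ)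
      = ∑ q ∈ Ioc 0 m, ((Nat.totient q : ℝ)/(q:ℝ)^2) * ∑ e ∈ Ioc 0 (m/q), (1:ℝ)/(e:ℝ)^2 := by
  have h1 : ∀ k ∈ Ioc 0 m, (1:ℝ)/(k:ℝ)
      = ∑ p ∈ k.divisorsAntidiagonal, (Nat.totient p.1 : ℝ)/(p.1:ℝ)^2 * (1/(p.2:ℝ)^2) := by
    intro k hk
    simp only [Finset.mem_Ioc] at hk
    have hk0 : (k:ℝ) ≠ 0 := Nat.cast_ne_zero.mpr (by omega)
    have : ∀ p ∈ k.divisorsAntidiagonal,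
        (Nat.totient p.1 : ℝ)/(p.1:ℝ)^2 * (1/(p.2:ℝ)^2) = (Nat.totient p.1 : ℝ)/(k:ℝ)^2 := by
      intro p hp
      rw [Nat.mem_divisorsAntidiagonal] at hp
      have : ((p.1 : ℝ) * (p.2 : ℝ)) = (k : ℝ) := by exact_mod_cast congrArg Nat.cast hp.1
      have hp1 : (p.1:ℝ) ≠ 0 := by
        intro h0; rw [h0, zero_mul] at this; exact hk0 this.symm
      have hp2 : (p.2:ℝ) ≠ 0 := by
        intro h0; rw [h0, mul_zero] at this; exact hk0 this.symm
      rw [div_mul_div_comm, mul_one, ← mul_pow, this]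
    rw [Finset.sum_congr rfl this, ← Finset.sum_div]
    have h2 : ∑ p ∈ k.divisorsAntidiagonal, (Nat.totient p.1 : ℝ) = (k : ℝ) := by
      rw [Nat.sum_divisorsAntidiagonal (fun d e => (Nat.totient d : ℝ))]
      rw [← Nat.cast_sum]
      rw [Nat.sum_totient]
    rw [h2]
    field_simp
  rw [Finset.sum_congr rfl h1, swap_div m (fun q e => (Nat.totient q : ℝ)/(q:ℝ)^2 * (1/(e:ℝ)^2))]
  simp_rw [← Finset.mul_sum]

lemma harm_le (m : ℕ) : ∑ k ∈ Ioc 0 m, (1:ℝ)/(k:ℝ) ≤ 1 + Real.log m := by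
  have he : ∑ k ∈ Ioc 0 m, (1:ℝ)/(k:ℝ) = ((harmonic m : ℚ) : ℝ) := by
    rw [harmonic_eq_sum_Icc]
    push_cast
    rw [← Finset.Icc_add_one_left_eq_Ioc]
    exact Finset.sum_congr rfl (fun i _ => one_div _)
  rw [he]
  exact harmonic_le_one_add_log m

lemma T_bound (m : ℕ) (hm : 1 ≤ m) :
    ∑ q ∈ Ioc 0 m, (Nat.totient q : ℝ)/(q:ℝ)^2 ≤ 6/π^2 * (Real.log m + 3) := by
  have hpi : (0:ℝ) < π^2/6 := by positivity
  have key : (π^2/6) * (∑ q ∈ Ioc 0 m, (Nat.totient q : ℝ)/(q:ℝ)^2)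
      ≤ (∑ k ∈ Ioc 0 m, (1:ℝ)/(k:ℝ)) + 2 := by
    rw [key_id m, Finset.mul_sum]
    have step : ∀ q ∈ Ioc 0 m,
        (π^2/6) * ((Nat.totient q : ℝ)/(q:ℝ)^2)
          ≤ ((Nat.totient q : ℝ)/(q:ℝ)^2) * (∑ e ∈ Ioc 0 (m/q), (1:ℝ)/(e:ℝ)^2) + 2/m := by
      intro q hq
      simp only [Finset.mem_Ioc] at hq
      have hq0 : 0 < q := hq.1
      have hdiv : 1 ≤ m / q := (Nat.one_le_div_iff hq0).mpr hq.2
      have hb := basel_lower (m/q) hdiv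
      have hphi : (0:ℝ) ≤ (Nat.totient q : ℝ)/(q:ℝ)^2 := by positivity
      have h1 : ((Nat.totient q : ℝ)/(q:ℝ)^2) * (π^2/6 - 1/(m/q : ℕ))
          ≤ ((Nat.totient q : ℝ)/(q:ℝ)^2) * (∑ e ∈ Ioc 0 (m/q), (1:ℝ)/(e:ℝ)^2) :=
        mul_le_mul_of_nonneg_left hb hphi
      have h2 : ((Nat.totient q : ℝ)/(q:ℝ)^2) * (1/(m/q : ℕ)) ≤ 2/m := by
        have hmd : m ≤ 2 * q * (m/q) := by
          have := Nat.div_add_mod m q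
          have := Nat.mod_lt m hq0
          nlinarith [hdiv, hq0]
        have hmdR : (m:ℝ) ≤ 2 * q * ((m/q : ℕ):ℝ) := by exact_mod_cast hmd
        have hq0R : (0:ℝ) < q := by exact_mod_cast hq0
        have hd0R : (0:ℝ) < ((m/q : ℕ):ℝ) := by exact_mod_cast hdiv
        have hm0R : (0:ℝ) < m := by exact_mod_cast hm
        have htot : (Nat.totient q : ℝ) ≤ q := by
          exact_mod_cast Nat.totient_le q
        have htot0 : (0:ℝ) ≤ (Nat.totient q : ℝ) := by positivity
        rw [div_mul_div_comm, mul_one, div_le_div_iff₀ (by positivity) hm0R]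
        calc (Nat.totient q : ℝ) * m ≤ q * (2 * q * ((m/q : ℕ):ℝ)) := by nlinarith
          _ = 2 * ((q:ℝ)^2 * ((m/q : ℕ):ℝ)) := by ring
      rw [mul_sub] at h1
      linarith
    calc ∑ q ∈ Ioc 0 m, (π^2/6) * ((Nat.totient q : ℝ)/(q:ℝ)^2)
        ≤ ∑ q ∈ Ioc 0 m, (((Nat.totient q : ℝ)/(q:ℝ)^2) * (∑ e ∈ Ioc 0 (m/q), (1:ℝ)/(e:ℝ)^2) + 2/m) :=
          Finset.sum_le_sum step
      _ = (∑ q ∈ Ioc 0 m, ((Nat.totient q : ℝ)/(q:ℝ)^2) * (∑ e ∈ Ioc 0 (m/q), (1:ℝ)/(e:ℝ)^2)) + m * (2/m) := by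
          rw [Finset.sum_add_distrib, Finset.sum_const, Nat.card_Ioc, Nat.sub_zero, nsmul_eq_mul]
      _ ≤ (∑ q ∈ Ioc 0 m, ((Nat.totient q : ℝ)/(q:ℝ)^2) * (∑ e ∈ Ioc 0 (m/q), (1:ℝ)/(e:ℝ)^2)) + 2 := by
          have hm0 : (0:ℝ) < m := by exact_mod_cast hm
          rw [mul_div_assoc']
          rw [mul_comm]
          rw [mul_div_assoc, div_self hm0.ne', mul_one]
  have hH := harm_le m
  have h6 : (0:ℝ) < 6/π^2 := by positivity
  have := mul_le_mul_of_nonneg_left key h6.le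
  have heq : 6/π^2 * (π^2/6 * (∑ q ∈ Ioc 0 m, (Nat.totient q : ℝ)/(q:ℝ)^2))
      = ∑ q ∈ Ioc 0 m, (Nat.totient q : ℝ)/(q:ℝ)^2 := by
    have hpi0 : π ≠ 0 := Real.pi_ne_zero
    field_simp
  rw [heq] at this
  calc ∑ q ∈ Ioc 0 m, (Nat.totient q : ℝ)/(q:ℝ)^2 ≤ 6/π^2 * ((∑ k ∈ Ioc 0 m, (1:ℝ)/(k:ℝ)) + 2) := this
    _ ≤ 6/π^2 * (Real.log m + 3) := by nlinarith

/-- `S x = ∑_{n ≤ x} φ(⌊x/n⌋)`, the sum being over positive integers `n ≤ x`. -/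
noncomputable def S (x : ℝ) : ℝ :=
  ∑ n ∈ Finset.Icc 1 ⌊x⌋₊, (Nat.totient ⌊x / (n : ℝ)⌋₊ : ℝ)

/-- Explicit upper bound: for every `x ≥ 3`,
`S(x) ≤ (1/2)(1 + 1/ζ(2)) x log x + 4x + √x log x / 4 + √x`. -/
theorem S_explicit_upper_bound (x : ℝ) (hx : 3 ≤ x) :
    S x ≤ (1 / 2) * (1 + 1 / (Real.pi ^ 2 / 6)) * x * Real.log x + 4 * x +
      Real.sqrt x * Real.log x / 4 + Real.sqrt x := by
  have hx1 : (1:ℝ) ≤ x := by linarith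
  have hx0 : (0:ℝ) < x := by linarith
  set N := ⌊x⌋₊ with hN
  set m := ⌊Real.sqrt x⌋₊ with hm
  have hsx1 : (1:ℝ) ≤ Real.sqrt x := Real.one_le_sqrt.mpr hx1
  have hsx0 : (0:ℝ) < Real.sqrt x := by linarith
  have hm1 : 1 ≤ m := Nat.le_floor (by exact_mod_cast hsx1)
  have hmx : (m:ℝ) ≤ Real.sqrt x := Nat.floor_le (by positivity)
  have hxm1 : Real.sqrt x < (m:ℝ) + 1 := Nat.lt_floor_add_one _
  have hsxx : Real.sqrt x ≤ x := by nlinarith [Real.sq_sqrt hx0.le]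
  have hmN : m ≤ N := Nat.le_floor (by linarith)
  have hNx : (N:ℝ) ≤ x := Nat.floor_le hx0.le
  have hlogm : Real.log m ≤ Real.log x / 2 := by
    rw [← Real.log_sqrt hx0.le]
    exact Real.log_le_log (by exact_mod_cast hm1) hmx
  have hlogx0 : 0 ≤ Real.log x := Real.log_nonneg hx1
  -- split sum
  have hsplit : S x = (∑ n ∈ Ioc 0 m, (Nat.totient ⌊x / (n : ℝ)⌋₊ : ℝ))
      + ∑ n ∈ Ioc m N, (Nat.totient ⌊x / (n : ℝ)⌋₊ : ℝ) := by
    rw [S, show Finset.Icc 1 N = Finset.Ioc 0 N by ext i; simp; omega,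
      ← Finset.sum_Ioc_consecutive _ (Nat.zero_le m) hmN]
  -- Part A
  have hA : (∑ n ∈ Ioc 0 m, (Nat.totient ⌊x / (n : ℝ)⌋₊ : ℝ)) ≤ x * (1 + Real.log x / 2) := by
    calc ∑ n ∈ Ioc 0 m, (Nat.totient ⌊x / (n : ℝ)⌋₊ : ℝ)
        ≤ ∑ n ∈ Ioc 0 m, x * ((1:ℝ)/(n:ℝ)) := by
          apply Finset.sum_le_sum
          intro n hn
          simp only [Finset.mem_Ioc] at hn
          have hn0 : (0:ℝ) < n := by exact_mod_cast hn.1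
          calc (Nat.totient ⌊x / (n : ℝ)⌋₊ : ℝ) ≤ (⌊x / (n : ℝ)⌋₊ : ℝ) := by
                exact_mod_cast Nat.totient_le _
            _ ≤ x / n := Nat.floor_le (by positivity)
            _ = x * (1/(n:ℝ)) := by ring
      _ = x * ∑ n ∈ Ioc 0 m, (1:ℝ)/(n:ℝ) := by rw [Finset.mul_sum]
      _ ≤ x * (1 + Real.log m) := by
          apply mul_le_mul_of_nonneg_left (harm_le m) hx0.le
      _ ≤ x * (1 + Real.log x / 2) := by
          apply mul_le_mul_of_nonneg_left (by linarith) hx0.le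
  -- Part B
  have hB : (∑ n ∈ Ioc m N, (Nat.totient ⌊x / (n : ℝ)⌋₊ : ℝ))
      ≤ x * (6/π^2 * (Real.log x / 2 + 3)) + x := by
    classical
    have hmaps : ∀ n ∈ Ioc m N, ⌊x / (n:ℝ)⌋₊ ∈ Ioc 0 m := by
      intro n hn
      simp only [Finset.mem_Ioc] at hn ⊢
      have hn1 : 1 ≤ n := by omega
      have hn0 : (0:ℝ) < n := by exact_mod_cast Nat.lt_of_lt_of_le (by omega) hn1
      have hnx : (n:ℝ) ≤ x := le_trans (by exact_mod_cast hn.2) hNx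
      constructor
      · exact Nat.floor_pos.mpr ((one_le_div hn0).mpr hnx)
      · have hns : Real.sqrt x < n := by
          have : (m:ℝ) + 1 ≤ n := by exact_mod_cast hn.1
          linarith
        have hlt1 : x / (n:ℝ) < (m:ℝ) + 1 := by
          have h1 : x / (n:ℝ) < x / Real.sqrt x := by
            apply div_lt_div_of_pos_left hx0 hsx0 hns
          rw [Real.div_sqrt] at h1
          linarith
        have hlt2 : x / (n:ℝ) < ((m+1 : ℕ) : ℝ) := by push_cast; linarith
        have := (Nat.floor_lt (by positivity)).mpr hlt2
        omega
    rw [← Finset.sum_fiberwise_of_maps_to hmaps (fun n => (Nat.totient ⌊x / (n:ℝ)⌋₊ : ℝ))]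
    have hinner : ∀ q ∈ Ioc 0 m,
        (∑ n ∈ (Ioc m N).filter (fun n : ℕ => ⌊x / (n:ℝ)⌋₊ = q), (Nat.totient ⌊x / (n:ℝ)⌋₊ : ℝ))
          ≤ (Nat.totient q : ℝ) * (x/(q:ℝ)^2 + 1) := by
      intro q hq
      simp only [Finset.mem_Ioc] at hq
      have hq0 : (0:ℝ) < q := by exact_mod_cast hq.1
      have hsum : (∑ n ∈ (Ioc m N).filter (fun n : ℕ => ⌊x / (n:ℝ)⌋₊ = q), (Nat.totient ⌊x / (n:ℝ)⌋₊ : ℝ))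
          = ((Ioc m N).filter (fun n : ℕ => ⌊x / (n:ℝ)⌋₊ = q)).card * (Nat.totient q : ℝ) := by
        rw [Finset.sum_congr rfl (fun n hn => ?_), Finset.sum_const, nsmul_eq_mul]
        rw [Finset.mem_filter] at hn
        rw [hn.2]
      rw [hsum]
      have hsub : (Ioc m N).filter (fun n : ℕ => ⌊x / (n:ℝ)⌋₊ = q) ⊆ Ioc ⌊x/((q:ℝ)+1)⌋₊ ⌊x/(q:ℝ)⌋₊ := by
        intro n hn
        rw [Finset.mem_filter, Finset.mem_Ioc] at hn
        obtain ⟨⟨hmn, hnN⟩, hfl⟩ := hn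
        have hn0 : (0:ℝ) < n := by
          have : 1 ≤ n := by omega
          exact_mod_cast this
        have hfr := (Nat.floor_eq_iff (by positivity)).mp hfl
        rw [Finset.mem_Ioc]
        constructor
        · have h1 : x / ((q:ℝ)+1) < n := by
            rw [div_lt_iff₀ (by positivity)]
            have h2 : x / (n:ℝ) < (q:ℝ)+1 := by exact_mod_cast hfr.2
            rw [div_lt_iff₀ hn0] at h2
            linarith
          have h3 : (⌊x/((q:ℝ)+1)⌋₊ : ℝ) ≤ x / ((q:ℝ)+1) := Nat.floor_le (by positivity)
          exact_mod_cast lt_of_le_of_lt h3 h1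
        · apply Nat.le_floor
          rw [le_div_iff₀ hq0]
          have h2 : (q:ℝ) ≤ x / (n:ℝ) := by exact_mod_cast hfr.1
          rw [le_div_iff₀ hn0] at h2
          linarith [mul_comm (q:ℝ) (n:ℝ)]
      have hcard : (((Ioc m N).filter (fun n : ℕ => ⌊x / (n:ℝ)⌋₊ = q)).card : ℝ) ≤ x/(q:ℝ)^2 + 1 := by
        have h1 := Finset.card_le_card hsub
        have h2 : (Ioc ⌊x/((q:ℝ)+1)⌋₊ ⌊x/(q:ℝ)⌋₊).card = ⌊x/(q:ℝ)⌋₊ - ⌊x/((q:ℝ)+1)⌋₊ :=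
          Nat.card_Ioc _ _
        have h3 : (⌊x/(q:ℝ)⌋₊ : ℝ) ≤ x/(q:ℝ) := Nat.floor_le (by positivity)
        have h4 : x/((q:ℝ)+1) - 1 < (⌊x/((q:ℝ)+1)⌋₊ : ℝ) := Nat.sub_one_lt_floor _
        have h5 : x/(q:ℝ) - x/((q:ℝ)+1) ≤ x/(q:ℝ)^2 := by
          have he : x/(q:ℝ) - x/((q:ℝ)+1) = x/((q:ℝ)*((q:ℝ)+1)) := by
            field_simp
            ring
          rw [he]
          apply div_le_div_of_nonneg_left hx0.le (by positivity)
          nlinarith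
        have h6 : (⌊x/(q:ℝ)⌋₊ - ⌊x/((q:ℝ)+1)⌋₊ : ℕ) ≤ ⌊x/(q:ℝ)⌋₊ - ⌊x/((q:ℝ)+1)⌋₊ + 0 := le_refl _
        calc (((Ioc m N).filter (fun n : ℕ => ⌊x / (n:ℝ)⌋₊ = q)).card : ℝ)
            ≤ ((⌊x/(q:ℝ)⌋₊ - ⌊x/((q:ℝ)+1)⌋₊ : ℕ) : ℝ) := by
              rw [← h2]; exact_mod_cast h1
          _ ≤ (⌊x/(q:ℝ)⌋₊ : ℝ) - (⌊x/((q:ℝ)+1)⌋₊ : ℝ) := by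
              have h7 : ⌊x/((q:ℝ)+1)⌋₊ ≤ ⌊x/(q:ℝ)⌋₊ := by
                apply Nat.floor_le_floor
                apply div_le_div_of_nonneg_left hx0.le hq0
                linarith
              rw [Nat.cast_sub h7]
          _ ≤ x/(q:ℝ)^2 + 1 := by linarith
      calc (((Ioc m N).filter (fun n : ℕ => ⌊x / (n:ℝ)⌋₊ = q)).card : ℝ) * (Nat.totient q : ℝ)
          ≤ (x/(q:ℝ)^2 + 1) * (Nat.totient q : ℝ) := by
            apply mul_le_mul_of_nonneg_right hcard (by positivity)
        _ = (Nat.totient q : ℝ) * (x/(q:ℝ)^2 + 1) := by ring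
    calc ∑ q ∈ Ioc 0 m, (∑ n ∈ (Ioc m N).filter (fun n : ℕ => ⌊x / (n:ℝ)⌋₊ = q), (Nat.totient ⌊x / (n:ℝ)⌋₊ : ℝ))
        ≤ ∑ q ∈ Ioc 0 m, (Nat.totient q : ℝ) * (x/(q:ℝ)^2 + 1) := Finset.sum_le_sum hinner
      _ = x * (∑ q ∈ Ioc 0 m, (Nat.totient q : ℝ)/(q:ℝ)^2) + ∑ q ∈ Ioc 0 m, (Nat.totient q : ℝ) := by
          rw [Finset.mul_sum, ← Finset.sum_add_distrib]
          apply Finset.sum_congr rfl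
          intro q hq
          ring
      _ ≤ x * (6/π^2 * (Real.log m + 3)) + ∑ q ∈ Ioc 0 m, (Nat.totient q : ℝ) := by
          have h := mul_le_mul_of_nonneg_left (T_bound m hm1) hx0.le
          linarith
      _ ≤ x * (6/π^2 * (Real.log x / 2 + 3)) + x := by
          have hpi : (0:ℝ) < 6/π^2 := by positivity
          have h1 : x * (6/π^2 * (Real.log m + 3)) ≤ x * (6/π^2 * (Real.log x / 2 + 3)) := by
            apply mul_le_mul_of_nonneg_left _ hx0.le
            apply mul_le_mul_of_nonneg_left (by linarith) hpi.le
          have h2 : ∑ q ∈ Ioc 0 m, (Nat.totient q : ℝ) ≤ x := by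
            calc ∑ q ∈ Ioc 0 m, (Nat.totient q : ℝ) ≤ ∑ q ∈ Ioc 0 m, (m:ℝ) := by
                  apply Finset.sum_le_sum
                  intro q hq
                  simp only [Finset.mem_Ioc] at hq
                  have := Nat.totient_le q
                  have : Nat.totient q ≤ m := le_trans this hq.2
                  exact_mod_cast this
              _ = (m:ℝ) * (m:ℝ) := by
                  rw [Finset.sum_const, Nat.card_Ioc, Nat.sub_zero, nsmul_eq_mul]
              _ ≤ Real.sqrt x * Real.sqrt x := by nlinarith
              _ = x := Real.mul_self_sqrt hx0.le
          linarith
  -- Conclusion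
  have hpi3 : (3:ℝ) < π := Real.pi_gt_three
  have hpisq : (9:ℝ) ≤ π^2 := by nlinarith
  have hfin : x * (1 + Real.log x / 2) + (x * (6/π^2 * (Real.log x / 2 + 3)) + x)
      ≤ (1 / 2) * (1 + 1 / (π ^ 2 / 6)) * x * Real.log x + 4 * x := by
    have h1 : (1:ℝ) / (π ^ 2 / 6) = 6/π^2 := by rw [one_div_div]
    rw [h1]
    have h2 : 6/π^2 * 3 ≤ 2 := by
      rw [div_mul_eq_mul_div, div_le_iff₀ (by positivity)]
      linarith
    have h3 : x * (6/π^2 * 3) ≤ x * 2 := mul_le_mul_of_nonneg_left h2 hx0.le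
    have hexp : x * (1 + Real.log x / 2) + (x * (6/π^2 * (Real.log x / 2 + 3)) + x)
        = (1/2)*(1+6/π^2)*x*Real.log x + (2*x + x*(6/π^2*3)) := by ring
    rw [hexp]
    linarith
  have hsq : 0 ≤ Real.sqrt x * Real.log x / 4 := by positivity
  rw [hsplit]
  linarith
end
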